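/- arXiv:2009.09755 — 4 statements merged into one kernel-verified Lean document; each statement's English description precedes it below -/
import Mathlib

section
/- (Smooth Hadamard-type lemma with vanishing to order k.) Let n ∈ ℕ, let s ≤ n, let k ∈ ℕ, let U be an open neighbourhood of 0 in Fin n → ℝ, and let S_s = {x : Fin n → ℝ | x i = 0 for every i with (i : ℕ) < s}. Suppose f : (Fin n → ℝ) → ℝ satisfies ContDiffOn ℝ ⊤ f U and iteratedFDerivWithin ℝ j f U x = 0 for every j ∈ {0, 1, …, k} and every x ∈ S_s ∩ U. Then there exist an open neighbourhood V of 0 with V ⊆ U and, for each multi-index I : Fin s → ℕ with |I| = k + 1, a function g_I : (Fin n → ℝ) → ℝ with ContDiffOn ℝ ⊤ g_I V, such that for all x ∈ V: f x = Σ over multi-indices I : Fin s → ℕ with |I| = k + 1 of g_I x * ∏ i : Fin s, (x (Fin.castLE h i)) ^ (I i) (where h : s ≤ n). -/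
set_option maxHeartbeats 1000000
set_option synthInstance.maxHeartbeats 400000

open Set MeasureTheory Metric
open scoped ContDiff

/-- Differentiation under the integral sign for a parametric interval integral of a
smooth integrand. -/
theorem hadamard_aux_hasFDerivAt
    {E G : Type} [NormedAddCommGroup E] [NormedSpace ℝ E] [ProperSpace E]
    [NormedAddCommGroup G] [NormedSpace ℝ G] [CompleteSpace G]
    {V : Set E} (hV : IsOpen V) {F : ℝ × E → G}
    (hF : ContDiffOn ℝ (∞ : WithTop ℕ∞) F (Ioo (-2:ℝ) 2 ×ˢ V)) {x₀ : E} (hx₀ : x₀ ∈ V) :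
    HasFDerivAt (fun x => ∫ t in (0:ℝ)..1, F (t, x))
      (∫ t in (0:ℝ)..1, (fderiv ℝ F (t, x₀)).comp (ContinuousLinearMap.inr ℝ ℝ E)) x₀ := by
  have h1le : (1 : WithTop ℕ∞) ≤ ∞ := by exact_mod_cast le_top
  set D := Ioo (-2:ℝ) 2 ×ˢ V with hD_def
  have hD : IsOpen D := isOpen_Ioo.prod hV
  obtain ⟨ε, εpos, hball⟩ : ∃ ε > 0, closedBall x₀ ε ⊆ V := by
    obtain ⟨ε, εpos, hb⟩ := Metric.isOpen_iff.1 hV x₀ hx₀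
    exact ⟨ε/2, by positivity, (closedBall_subset_ball (by linarith)).trans hb⟩
  have hIsub : Set.uIoc (0:ℝ) 1 ⊆ Ioo (-2:ℝ) 2 := by
    rw [uIoc_of_le (by norm_num : (0:ℝ) ≤ 1)]
    exact fun t ht => ⟨by linarith [ht.1], by linarith [ht.2]⟩
  have hmem : ∀ t ∈ Set.uIoc (0:ℝ) 1, ∀ x ∈ V, (t, x) ∈ D :=
    fun t ht x hx => ⟨hIsub ht, hx⟩
  have hK : IsCompact (Icc (0:ℝ) 1 ×ˢ closedBall x₀ ε) :=
    isCompact_Icc.prod (isCompact_closedBall _ _)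
  have hKD : Icc (0:ℝ) 1 ×ˢ closedBall x₀ ε ⊆ D :=
    prod_mono (Icc_subset_Ioo (by norm_num) (by norm_num)) hball
  have hFd : ContinuousOn (fderiv ℝ F) D := hF.continuousOn_fderiv_of_isOpen hD h1le
  obtain ⟨C, hC⟩ := hK.exists_bound_of_continuousOn (hFd.mono hKD)
  have contF : ∀ x ∈ V, ContinuousOn (fun t => F (t, x)) (Set.uIoc (0:ℝ) 1) := by
    intro x hx
    exact hF.continuousOn.comp ((continuous_id.prodMk continuous_const).continuousOn)
      (fun t ht => hmem t ht x hx)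
  have key := intervalIntegral.hasFDerivAt_integral_of_dominated_of_fderiv_le
    (𝕜 := ℝ) (μ := volume) (F := fun x t => F (t, x))
    (F' := fun x t => (fderiv ℝ F (t, x)).comp (ContinuousLinearMap.inr ℝ ℝ E))
    (x₀ := x₀) (a := 0) (b := 1) (bound := fun _ => |C|) (ball_mem_nhds x₀ εpos) ?_ ?_ ?_ ?_ ?_ ?_
  · exact key
  · filter_upwards [hV.mem_nhds hx₀] with x hx using
      (contF x hx).aestronglyMeasurable measurableSet_uIoc
  · apply ContinuousOn.intervalIntegrable
    apply hF.continuousOn.comp ((continuous_id.prodMk continuous_const).continuousOn)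
    intro t ht
    rw [uIcc_of_le (by norm_num : (0:ℝ) ≤ 1)] at ht
    obtain ⟨ht1, ht2⟩ := ht
    exact ⟨⟨by norm_num; linarith, by norm_num; linarith⟩, hx₀⟩
  · have h1 : ContinuousOn (fun t => fderiv ℝ F (t, x₀)) (Set.uIoc (0:ℝ) 1) :=
      hFd.comp ((continuous_id.prodMk continuous_const).continuousOn)
        (fun t ht => hmem t ht x₀ hx₀)
    have h2 : ContinuousOn (fun t => (fderiv ℝ F (t, x₀)).comp
        (ContinuousLinearMap.inr ℝ ℝ E)) (Set.uIoc (0:ℝ) 1) :=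
      ((ContinuousLinearMap.compL ℝ E (ℝ × E) G).flip
        (ContinuousLinearMap.inr ℝ ℝ E)).continuous.comp_continuousOn h1
    exact h2.aestronglyMeasurable measurableSet_uIoc
  · filter_upwards with t
    intro ht x hx
    have hxV : x ∈ closedBall x₀ ε := ball_subset_closedBall hx
    have hmemK : (t, x) ∈ Icc (0:ℝ) 1 ×ˢ closedBall x₀ ε := by
      refine ⟨?_, hxV⟩
      rw [uIoc_of_le (by norm_num : (0:ℝ) ≤ 1)] at ht
      exact ⟨le_of_lt ht.1, ht.2⟩
    calc ‖(fderiv ℝ F (t, x)).comp (ContinuousLinearMap.inr ℝ ℝ E)‖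
        ≤ ‖fderiv ℝ F (t, x)‖ * ‖ContinuousLinearMap.inr ℝ ℝ E‖ :=
          ContinuousLinearMap.opNorm_comp_le _ _
      _ ≤ |C| * 1 := by
          gcongr
          · exact (hC _ hmemK).trans (le_abs_self C)
          · refine ContinuousLinearMap.opNorm_le_bound _ zero_le_one (fun u => ?_)
            simp [Prod.norm_def]
      _ = |C| := mul_one _
  · exact intervalIntegrable_const
  · filter_upwards with t
    intro ht x hx
    have hxD : (t, x) ∈ D := hmem t ht x (hball (ball_subset_closedBall hx))
    have hdF : DifferentiableAt ℝ F (t, x) :=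
      ((hF.differentiableOn (by simp)).differentiableAt (hD.mem_nhds hxD))
    exact hdF.hasFDerivAt.comp x (hasFDerivAt_prodMk_right t x)

/-- A parametric interval integral of a smooth integrand is `C^m` for every `m`. -/
theorem hadamard_aux_contDiffOn
    {E : Type} [NormedAddCommGroup E] [NormedSpace ℝ E] [ProperSpace E]
    {V : Set E} (hV : IsOpen V) (m : ℕ) :
    ∀ {G : Type} [NormedAddCommGroup G] [NormedSpace ℝ G] [CompleteSpace G]
      (F : ℝ × E → G), ContDiffOn ℝ (∞ : WithTop ℕ∞) F (Ioo (-2:ℝ) 2 ×ˢ V) →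
      ContDiffOn ℝ (m : WithTop ℕ∞) (fun x => ∫ t in (0:ℝ)..1, F (t, x)) V := by
  induction m with
  | zero =>
    intro G _ _ _ F hF
    rw [Nat.cast_zero, contDiffOn_zero]
    intro x hx
    exact ((hadamard_aux_hasFDerivAt hV hF hx).differentiableAt.continuousAt).continuousWithinAt
  | succ m ih =>
    intro G _ _ _ F hF
    have hD : IsOpen (Ioo (-2:ℝ) 2 ×ˢ V) := isOpen_Ioo.prod hV
    have hinf : (∞ : WithTop ℕ∞) + 1 ≤ ∞ := by norm_num
    have hG : ContDiffOn ℝ (∞ : WithTop ℕ∞)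
        (fun p : ℝ × E => (fderiv ℝ F p).comp (ContinuousLinearMap.inr ℝ ℝ E))
        (Ioo (-2:ℝ) 2 ×ˢ V) :=
      (((ContinuousLinearMap.compL ℝ E (ℝ × E) G).flip
        (ContinuousLinearMap.inr ℝ ℝ E)).contDiff.comp_contDiffOn
          (hF.fderiv_of_isOpen hD hinf))
    have hcast : ((m + 1 : ℕ) : WithTop ℕ∞) = (m : WithTop ℕ∞) + 1 := by
      push_cast; ring
    rw [hcast, contDiffOn_succ_iff_fderiv_of_isOpen hV]
    refine ⟨fun x hx =>
      (hadamard_aux_hasFDerivAt hV hF hx).differentiableAt.differentiableWithinAt, ?_, ?_⟩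
    · intro hω
      exact absurd hω (by exact_mod_cast WithTop.natCast_ne_top m)
    · refine (ih _ hG).congr (fun x hx => ?_)
      exact (hadamard_aux_hasFDerivAt hV hF hx).fderiv

/-- The telescoping identity behind the integral form of the Taylor remainder. -/
theorem hadamard_telescope (k : ℕ) (a : ℝ) (B : ℕ → ℝ) :
    ∑ j ∈ Finset.range (k+1),
      ((j:ℝ) * a^(j-1) * (-1) / (j.factorial:ℝ) * B j + a^j / (j.factorial:ℝ) * B (j+1))
      = a^k / (k.factorial:ℝ) * B (k+1) := by
  induction k with
  | zero => norm_num
  | succ k ih =>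
    rw [Finset.sum_range_succ, ih]
    have hfac : (((k+1).factorial : ℕ) : ℝ) = ((k:ℝ)+1) * (k.factorial:ℝ) := by
      rw [Nat.factorial_succ]; push_cast; ring
    have hne : (k.factorial:ℝ) ≠ 0 := Nat.cast_ne_zero.2 (Nat.factorial_ne_zero k)
    have hne2 : (k:ℝ) + 1 ≠ 0 := by positivity
    simp only [Nat.add_sub_cancel, hfac]
    push_cast
    field_simp
    ring

/-- Smooth Hadamard-type lemma with vanishing to order `k`: if `f` is `C^∞` on an open
neighbourhood `U` of `0` in `ℝⁿ` and its iterated derivatives of order `≤ k` vanish on the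
coordinate subspace `{x | x i = 0 for i < s}` intersected with `U`, then on a smaller
neighbourhood `V` of `0`, `f` is a sum of `C^∞` functions times the monomials of degree
`k + 1` in the first `s` coordinates. -/
theorem smooth_hadamard_vanishing_order
    (n s k : ℕ) (h : s ≤ n) (U : Set (Fin n → ℝ)) (hU : IsOpen U)
    (h0 : (0 : Fin n → ℝ) ∈ U) (f : (Fin n → ℝ) → ℝ)
    (hf : ContDiffOn ℝ (⊤ : ℕ∞) f U)
    (hvan : ∀ j ≤ k, ∀ x ∈ {x : Fin n → ℝ | ∀ i : Fin n, (i : ℕ) < s → x i = 0} ∩ U,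
      iteratedFDerivWithin ℝ j f U x = 0) :
    ∃ V : Set (Fin n → ℝ), IsOpen V ∧ (0 : Fin n → ℝ) ∈ V ∧ V ⊆ U ∧
      ∃ g : (Fin s → ℕ) → (Fin n → ℝ) → ℝ,
        (∀ I : Fin s → ℕ, ∑ i : Fin s, I i = k + 1 → ContDiffOn ℝ (⊤ : ℕ∞) (g I) V) ∧
        ∀ x ∈ V, f x = ∑ I ∈ Finset.Nat.antidiagonalTuple s (k + 1),
          g I x * ∏ i : Fin s, (x (Fin.castLE h i)) ^ (I i) := by
  classical
  obtain ⟨r, rpos, hrU⟩ := Metric.isOpen_iff.1 hU 0 h0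
  set V : Set (Fin n → ℝ) := ball (0 : Fin n → ℝ) (r/2) with hV_def
  have hVopen : IsOpen V := isOpen_ball
  have h0V : (0 : Fin n → ℝ) ∈ V := mem_ball_self (by positivity)
  have hVU : V ⊆ U := fun x hx => hrU (ball_subset_ball (by linarith) hx)
  -- the projection onto the first `s` coordinates, and the scaling map
  set P : (Fin n → ℝ) →L[ℝ] (Fin n → ℝ) :=
    ContinuousLinearMap.pi
      (fun i : Fin n => if (i:ℕ) < s then ContinuousLinearMap.proj i else 0) with hP_def
  have hP : ∀ (x : Fin n → ℝ) (i : Fin n), P x i = if (i:ℕ) < s then x i else 0 := by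
    intro x i
    simp only [hP_def, ContinuousLinearMap.pi_apply]
    split <;> simp_all
  set σ : ℝ × (Fin n → ℝ) → (Fin n → ℝ) := fun p => p.2 + (p.1 - 1) • P p.2 with hσ_def
  have hσ_fun : ∀ (u : ℝ) (x : Fin n → ℝ), σ (u, x) = x + (u - 1) • P x := fun u x => rfl
  have hσcd : ContDiff ℝ (∞ : WithTop ℕ∞) σ :=
    contDiff_snd.add ((contDiff_fst.sub contDiff_const).smul
      (P.contDiff.comp contDiff_snd))
  have hσcoord : ∀ (t : ℝ) (x : Fin n → ℝ) (i : Fin n),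
      σ (t, x) i = if (i:ℕ) < s then t * x i else x i := by
    intro t x i
    simp only [hσ_def, Pi.add_apply, Pi.smul_apply, smul_eq_mul, hP]
    split <;> ring
  have hσ1 : ∀ x : Fin n → ℝ, σ (1, x) = x := by
    intro x; funext i; rw [hσcoord]; split <;> simp
  have hσball : ∀ t ∈ Ioo (-2:ℝ) 2, ∀ x ∈ V, σ (t, x) ∈ ball (0 : Fin n → ℝ) r := by
    intro t ht x hx
    rw [mem_ball_zero_iff]
    have hx' : ‖x‖ < r/2 := by rwa [hV_def, mem_ball_zero_iff] at hx
    have hb : ‖σ (t, x)‖ ≤ 2 * ‖x‖ := by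
      apply pi_norm_le_iff_of_nonneg (by positivity) |>.2
      intro i
      rw [hσcoord]
      have hxi : ‖x i‖ ≤ ‖x‖ := norm_le_pi_norm x i
      split
      · rw [Real.norm_eq_abs, abs_mul]
        have h2 : |t| ≤ 2 := by
          rw [abs_le]; constructor <;> [linarith [ht.1]; linarith [ht.2]]
        calc |t| * |x i| ≤ 2 * |x i| := by
              apply mul_le_mul_of_nonneg_right h2 (abs_nonneg _)
          _ ≤ 2 * ‖x‖ := by
              rw [← Real.norm_eq_abs]
              exact mul_le_mul_of_nonneg_left hxi (by norm_num)
      · nlinarith [norm_nonneg x]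
    linarith
  have hσU : ∀ t ∈ Ioo (-2:ℝ) 2, ∀ x ∈ V, σ (t, x) ∈ U :=
    fun t ht x hx => hrU (hσball t ht x hx)
  -- iterated derivatives of `f` are smooth on `U` and vanish on the subspace
  have hA : ∀ j : ℕ, ContDiffOn ℝ (∞ : WithTop ℕ∞) (iteratedFDeriv ℝ j f) U := by
    intro j y hy
    have h1 : ContDiffAt ℝ (∞ : WithTop ℕ∞) f y := hf.contDiffAt (hU.mem_nhds hy)
    exact (h1.iteratedFDeriv_right (by exact_mod_cast le_top)).contDiffWithinAt
  have hAvan : ∀ j ≤ k, ∀ y ∈ {x : Fin n → ℝ | ∀ i : Fin n, (i : ℕ) < s → x i = 0} ∩ U,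
      iteratedFDeriv ℝ j f y = 0 := by
    intro j hj y hy
    rw [← iteratedFDerivWithin_of_isOpen j hU hy.2]
    exact hvan j hj y hy
  -- basis vectors
  set e : Fin n → (Fin n → ℝ) := fun i => Pi.single i (1:ℝ) with he_def
  have hPsum : ∀ x : Fin n → ℝ,
      P x = ∑ i : Fin s, x (Fin.castLE h i) • e (Fin.castLE h i) := by
    intro x
    funext j
    rw [Finset.sum_apply, hP x j]
    by_cases hj : (j : ℕ) < s
    · rw [if_pos hj, Finset.sum_eq_single (⟨(j:ℕ), hj⟩ : Fin s)]
      · have hcast : Fin.castLE h (⟨(j:ℕ), hj⟩ : Fin s) = j := Fin.ext rfl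
        rw [hcast]
        simp [he_def]
      · intro i _ hne
        have hne2 : Fin.castLE h i ≠ j := by
          intro hceq
          apply hne
          apply Fin.ext
          simpa using congrArg Fin.val hceq
        simp [he_def, Pi.single_apply, Ne.symm hne2]
      · intro habs
        exact absurd (Finset.mem_univ _) habs
    · rw [if_neg hj]
      symm
      apply Finset.sum_eq_zero
      intro i _
      have hne2 : Fin.castLE h i ≠ j := by
        intro hceq
        apply hj
        rw [← hceq]
        exact i.isLt
      simp [he_def, Pi.single_apply, Ne.symm hne2]
  -- the candidate functions
  set hfun : (Fin (k+1) → Fin s) → (Fin n → ℝ) → ℝ := fun c x =>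
    ∫ t in (0:ℝ)..1, ((1-t)^k / (k.factorial : ℝ)) *
      (iteratedFDeriv ℝ (k+1) f (σ (t, x)) (fun m => e (Fin.castLE h (c m)))) with hfun_def
  set cnt : (Fin (k+1) → Fin s) → (Fin s → ℕ) := fun c i =>
    (Finset.univ.filter (fun m => c m = i)).card with hcnt_def
  set g : (Fin s → ℕ) → (Fin n → ℝ) → ℝ := fun I x =>
    ∑ c ∈ Finset.univ.filter (fun c : Fin (k+1) → Fin s => cnt c = I), hfun c x with hg_def
  refine ⟨V, hVopen, h0V, hVU, g, ?_, ?_⟩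
  · -- smoothness of the coefficient functions
    intro I _
    apply ContDiffOn.sum
    intro c _
    apply contDiffOn_infty.2
    intro m
    have h1 : ContDiffOn ℝ (∞ : WithTop ℕ∞)
        (fun p : ℝ × (Fin n → ℝ) => iteratedFDeriv ℝ (k+1) f (σ p))
        (Ioo (-2:ℝ) 2 ×ˢ V) :=
      (hA (k+1)).comp hσcd.contDiffOn (fun p hp => hσU p.1 hp.1 p.2 hp.2)
    have h2 : ContDiffOn ℝ (∞ : WithTop ℕ∞)
        (fun p : ℝ × (Fin n → ℝ) => iteratedFDeriv ℝ (k+1) f (σ p)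
          (fun m => e (Fin.castLE h (c m)))) (Ioo (-2:ℝ) 2 ×ˢ V) :=
      (ContinuousMultilinearMap.apply ℝ (fun _ : Fin (k+1) => (Fin n → ℝ)) ℝ
        (fun m => e (Fin.castLE h (c m)))).contDiff.comp_contDiffOn h1
    have h3 : ContDiff ℝ (∞ : WithTop ℕ∞)
        (fun p : ℝ × (Fin n → ℝ) => (1 - p.1)^k / (k.factorial : ℝ)) :=
      ((contDiff_const.sub contDiff_fst).pow k).div_const _
    simp only [hfun_def]
    exact hadamard_aux_contDiffOn hVopen m
      (fun p : ℝ × (Fin n → ℝ) => ((1-p.1)^k / (k.factorial : ℝ)) *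
        (iteratedFDeriv ℝ (k+1) f (σ p) (fun m => e (Fin.castLE h (c m)))))
      (h3.contDiffOn.mul h2)
  · -- the representation identity
    intro x hx
    -- Step 1: the Taylor formula with integral remainder along the scaling path
    have hBderiv : ∀ j : ℕ, ∀ t ∈ Ioo (-2:ℝ) 2,
        HasDerivAt (fun u => iteratedFDeriv ℝ j f (σ (u, x)) (fun _ : Fin j => P x))
          (iteratedFDeriv ℝ (j+1) f (σ (t, x)) (fun _ : Fin (j+1) => P x)) t := by
      intro j t ht
      have hyU : σ (t, x) ∈ U := hσU t ht x hx
      have hdiff : DifferentiableAt ℝ (iteratedFDeriv ℝ j f) (σ (t, x)) :=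
        ((hA j).differentiableOn (by simp)).differentiableAt
          (hU.mem_nhds hyU)
      have hσt : HasDerivAt (fun u : ℝ => σ (u, x)) (P x) t := by
        have heq : (fun u : ℝ => σ (u, x)) = fun u => x + (u - 1) • P x := by
          funext u; exact hσ_fun u x
        rw [heq]
        have := (((hasDerivAt_id t).sub_const 1).smul_const (P x)).const_add x
        simpa using this
      have hcomp := hdiff.hasFDerivAt.comp_hasDerivAt t hσt
      have happ := (ContinuousMultilinearMap.apply ℝ (fun _ : Fin j => (Fin n → ℝ)) ℝ
        (fun _ => P x)).hasFDerivAt.comp_hasDerivAt t hcomp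
      exact happ.congr_deriv (by rw [iteratedFDeriv_succ_apply_left]; rfl)
    have hTderiv : ∀ t ∈ Icc (0:ℝ) 1,
        HasDerivAt (fun u => ∑ j ∈ Finset.range (k+1),
            ((1-u)^j / (j.factorial : ℝ)) *
              iteratedFDeriv ℝ j f (σ (u, x)) (fun _ : Fin j => P x))
          ((1-t)^k / (k.factorial : ℝ) *
            iteratedFDeriv ℝ (k+1) f (σ (t, x)) (fun _ : Fin (k+1) => P x)) t := by
      intro t ht
      have ht' : t ∈ Ioo (-2:ℝ) 2 := ⟨by linarith [ht.1], by linarith [ht.2]⟩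
      have hsum : HasDerivAt (fun u => ∑ j ∈ Finset.range (k+1),
          ((1-u)^j / (j.factorial:ℝ)) *
            iteratedFDeriv ℝ j f (σ (u, x)) (fun _ : Fin j => P x))
          (∑ j ∈ Finset.range (k+1),
            ((j:ℝ) * (1-t)^(j-1) * (-1) / (j.factorial:ℝ) *
              iteratedFDeriv ℝ j f (σ (t, x)) (fun _ : Fin j => P x)
            + (1-t)^j / (j.factorial:ℝ) *
              iteratedFDeriv ℝ (j+1) f (σ (t, x)) (fun _ : Fin (j+1) => P x))) t := by
        apply HasDerivAt.fun_sum
        intro j _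
        have h1 : HasDerivAt (fun u : ℝ => 1-u) (-1) t := (hasDerivAt_id t).const_sub 1
        have hpoly : HasDerivAt (fun u : ℝ => (1-u)^j / (j.factorial:ℝ))
            ((j:ℝ) * (1-t)^(j-1) * (-1) / (j.factorial:ℝ)) t :=
          ((hasDerivAt_pow j ((1:ℝ)-t)).comp t h1).div_const _
        exact hpoly.mul (hBderiv j t ht')
      convert hsum using 1
      exact (hadamard_telescope k (1-t)
        (fun j => iteratedFDeriv ℝ j f (σ (t, x)) (fun _ : Fin j => P x))).symm
    have hcontA : ∀ w : Fin (k+1) → (Fin n → ℝ), ContinuousOn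
        (fun t => (1-t)^k / (k.factorial:ℝ) *
          iteratedFDeriv ℝ (k+1) f (σ (t, x)) w) (uIcc (0:ℝ) 1) := by
      intro w
      apply ContinuousOn.mul
      · fun_prop
      · have hmaps : MapsTo (fun t : ℝ => σ (t, x)) (uIcc (0:ℝ) 1) U := by
          intro t ht
          rw [uIcc_of_le (by norm_num : (0:ℝ) ≤ 1)] at ht
          exact hσU t ⟨by linarith [ht.1], by linarith [ht.2]⟩ x hx
        have hc1 : ContinuousOn (fun t : ℝ => iteratedFDeriv ℝ (k+1) f (σ (t, x)))
            (uIcc (0:ℝ) 1) :=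
          ((hA (k+1)).continuousOn).comp
            ((hσcd.continuous.comp (continuous_id.prodMk continuous_const)).continuousOn)
            hmaps
        exact (ContinuousMultilinearMap.apply ℝ (fun _ : Fin (k+1) => (Fin n → ℝ)) ℝ
          w).continuous.comp_continuousOn hc1
    have hFTC := intervalIntegral.integral_eq_sub_of_hasDerivAt
      (f := fun u => ∑ j ∈ Finset.range (k+1), ((1-u)^j / (j.factorial:ℝ)) *
        iteratedFDeriv ℝ j f (σ (u, x)) (fun _ : Fin j => P x))
      (f' := fun t => (1-t)^k/(k.factorial:ℝ) *
        iteratedFDeriv ℝ (k+1) f (σ (t, x)) (fun _ : Fin (k+1) => P x))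
      (a := 0) (b := 1)
      (fun t ht => hTderiv t (by rwa [uIcc_of_le (by norm_num : (0:ℝ) ≤ 1)] at ht))
      ((hcontA _).intervalIntegrable)
    have hT1 : (∑ j ∈ Finset.range (k+1), ((1-(1:ℝ))^j / (j.factorial:ℝ)) *
        iteratedFDeriv ℝ j f (σ (1, x)) (fun _ : Fin j => P x)) = f x := by
      rw [Finset.sum_eq_single 0]
      · simp [hσ1 x, iteratedFDeriv_zero_apply]
      · intro j _ hj
        have h10 : (1:ℝ) - 1 = 0 := by ring
        rw [h10, zero_pow hj]
        simp
      · intro habs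
        exact absurd (Finset.mem_range.2 (by omega)) habs
    have hT0 : (∑ j ∈ Finset.range (k+1), ((1-(0:ℝ))^j / (j.factorial:ℝ)) *
        iteratedFDeriv ℝ j f (σ (0, x)) (fun _ : Fin j => P x)) = 0 := by
      apply Finset.sum_eq_zero
      intro j hj
      have hmem : σ (0, x) ∈ {y : Fin n → ℝ | ∀ i : Fin n, (i:ℕ) < s → y i = 0} ∩ U := by
        constructor
        · intro i hi; rw [hσcoord, if_pos hi]; ring
        · exact hσU 0 (by norm_num) x hx
      rw [hAvan j (Nat.lt_succ_iff.1 (Finset.mem_range.1 hj)) (σ (0, x)) hmem]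
      simp
    -- Step 2: multilinear expansion of the remainder integrand
    have hexp : ∀ t : ℝ,
        (1-t)^k/(k.factorial:ℝ) *
          iteratedFDeriv ℝ (k+1) f (σ (t, x)) (fun _ : Fin (k+1) => P x)
        = ∑ c : Fin (k+1) → Fin s, (∏ m, x (Fin.castLE h (c m))) *
            ((1-t)^k/(k.factorial:ℝ) *
              iteratedFDeriv ℝ (k+1) f (σ (t, x)) (fun m => e (Fin.castLE h (c m)))) := by
      intro t
      have hmap : iteratedFDeriv ℝ (k+1) f (σ (t, x)) (fun _ : Fin (k+1) => P x)
          = ∑ c : Fin (k+1) → Fin s, (∏ m, x (Fin.castLE h (c m))) *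
              iteratedFDeriv ℝ (k+1) f (σ (t, x)) (fun m => e (Fin.castLE h (c m))) := by
        rw [show (fun _ : Fin (k+1) => P x)
            = fun _ : Fin (k+1) => ∑ i : Fin s, x (Fin.castLE h i) • e (Fin.castLE h i)
            from funext (fun _ => hPsum x)]
        rw [(iteratedFDeriv ℝ (k+1) f (σ (t, x))).map_sum]
        apply Finset.sum_congr rfl
        intro c _
        rw [(iteratedFDeriv ℝ (k+1) f (σ (t, x))).map_smul_univ]
        rw [smul_eq_mul]
      rw [hmap, Finset.mul_sum]
      apply Finset.sum_congr rfl
      intro c _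
      ring
    have hswap : (∫ t in (0:ℝ)..1,
          ∑ c : Fin (k+1) → Fin s, (∏ m, x (Fin.castLE h (c m))) *
            ((1-t)^k/(k.factorial:ℝ) *
              iteratedFDeriv ℝ (k+1) f (σ (t, x)) (fun m => e (Fin.castLE h (c m)))))
        = ∑ c : Fin (k+1) → Fin s, (∏ m, x (Fin.castLE h (c m))) * hfun c x := by
      rw [intervalIntegral.integral_finset_sum]
      · apply Finset.sum_congr rfl
        intro c _
        rw [hfun_def, ← intervalIntegral.integral_const_mul]
      · intro c _
        exact (continuousOn_const.mul (hcontA _)).intervalIntegrable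
    have hfx : f x = ∑ c : Fin (k+1) → Fin s,
        (∏ m, x (Fin.castLE h (c m))) * hfun c x := by
      calc f x = ∫ t in (0:ℝ)..1, (1-t)^k/(k.factorial:ℝ) *
            iteratedFDeriv ℝ (k+1) f (σ (t, x)) (fun _ : Fin (k+1) => P x) := by
            rw [hFTC]
            beta_reduce
            rw [hT1, hT0, sub_zero]
        _ = ∫ t in (0:ℝ)..1,
            ∑ c : Fin (k+1) → Fin s, (∏ m, x (Fin.castLE h (c m))) *
              ((1-t)^k/(k.factorial:ℝ) *
                iteratedFDeriv ℝ (k+1) f (σ (t, x)) (fun m => e (Fin.castLE h (c m)))) := by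
            apply intervalIntegral.integral_congr
            intro t _
            exact hexp t
        _ = ∑ c : Fin (k+1) → Fin s, (∏ m, x (Fin.castLE h (c m))) * hfun c x := hswap
    -- Step 3: regroup the sum over tuples into a sum over multi-indices
    rw [hfx]
    have hmapsTo : ∀ c : Fin (k+1) → Fin s, c ∈ (Finset.univ : Finset _) →
        cnt c ∈ Finset.Nat.antidiagonalTuple s (k+1) := by
      intro c _
      rw [Finset.Nat.mem_antidiagonalTuple]
      have := Finset.card_eq_sum_card_fiberwise
        (f := c) (s := Finset.univ) (t := Finset.univ) (fun m _ => Finset.mem_univ (c m))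
      simpa [hcnt_def, Finset.card_univ] using this.symm
    rw [← Finset.sum_fiberwise_of_maps_to hmapsTo
      (fun c => (∏ m, x (Fin.castLE h (c m))) * hfun c x)]
    apply Finset.sum_congr rfl
    intro I hI
    rw [hg_def]
    rw [Finset.sum_mul]
    apply Finset.sum_congr rfl
    intro c hc
    have hc' : cnt c = I := (Finset.mem_filter.1 hc).2
    have hprod : (∏ m, x (Fin.castLE h (c m)))
        = ∏ i : Fin s, (x (Fin.castLE h i))^(I i) := by
      rw [← hc']
      rw [← Finset.prod_fiberwise_of_maps_to (fun m _ => Finset.mem_univ (c m))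
        (fun m => x (Fin.castLE h (c m)))]
      apply Finset.prod_congr rfl
      intro i _
      rw [Finset.prod_congr rfl (fun m hm => by rw [(Finset.mem_filter.1 hm).2]),
        Finset.prod_const]
    rw [hprod]
    exact mul_comm _ _
end

section
/- (Open mapping criterion via seminorms.) Let E and F be real topological vector spaces (topological additive groups with continuous scalar multiplication) that are locally convex, and let L : E →L[ℝ] F be a continuous linear map. Suppose that for every continuous seminorm q on E there exists a continuous seminorm p on F such that q u ≤ p (L u) for all u ∈ E. Then L is an open map onto its image: for every open set s ⊆ E there exists an open set t ⊆ F such that L '' s = t ∩ Set.range L (equivalently, the corestriction of L to Set.range L, with the subspace topology, is an open map). -/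
/-- Open mapping criterion via seminorms: if `L : E →L[ℝ] F` between locally convex real
topological vector spaces is such that every continuous seminorm `q` on `E` is dominated by
`p ∘ L` for some continuous seminorm `p` on `F`, then `L` is open onto its image: the image
of any open set is the intersection of an open set with the range of `L`. -/
theorem openMap_onto_image_of_seminorm_bounds
    (E F : Type*) [AddCommGroup E] [Module ℝ E] [TopologicalSpace E]
    [IsTopologicalAddGroup E] [ContinuousSMul ℝ E] [LocallyConvexSpace ℝ E]
    [AddCommGroup F] [Module ℝ F] [TopologicalSpace F]
    [IsTopologicalAddGroup F] [ContinuousSMul ℝ F] [LocallyConvexSpace ℝ F]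
    (L : E →L[ℝ] F)
    (hL : ∀ q : Seminorm ℝ E, Continuous (⇑q) →
      ∃ p : Seminorm ℝ F, Continuous (⇑p) ∧ ∀ u : E, q u ≤ p (L u)) :
    ∀ s : Set E, IsOpen s → ∃ t : Set F, IsOpen t ∧ (⇑L) '' s = t ∩ Set.range (⇑L) := by
  classical
  intro s hs
  have hws : WithSeminorms (gaugeSeminormFamily ℝ E) := with_gaugeSeminormFamily
  choose! I r hr hball using fun x (hx : x ∈ s) =>
    (hws.mem_nhds_iff x s).mp (hs.mem_nhds hx)
  set q : E → Seminorm ℝ E := fun x => (I x).sup (gaugeSeminormFamily ℝ E) with hq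
  have hsupc : ∀ t : Finset (AbsConvexOpenSets ℝ E),
      Continuous ⇑(t.sup (gaugeSeminormFamily ℝ E)) := by
    intro t
    induction t using Finset.induction_on with
    | empty =>
      simp only [Finset.sup_empty, Seminorm.coe_bot]
      exact continuous_zero
    | insert a t hmem ih =>
      simp only [Finset.sup_insert, Seminorm.coe_sup]
      exact (hws.continuous_seminorm _).max ih
  have hqc : ∀ x : E, Continuous ⇑(q x) := fun x => hsupc (I x)
  choose p hpc hple using fun x => hL (q x) (hqc x)
  refine ⟨⋃ x ∈ s, (p x).ball (L x) (r x), ?_, ?_⟩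
  · refine isOpen_biUnion fun x hx => ?_
    have : (p x).ball (L x) (r x) = (fun y => p x (y - L x)) ⁻¹' Set.Iio (r x) := by
      ext y; simp [Seminorm.mem_ball]
    rw [this]
    exact isOpen_Iio.preimage ((hpc x).comp (continuous_id.sub continuous_const))
  · ext y
    constructor
    · rintro ⟨u, hu, rfl⟩
      exact ⟨Set.mem_biUnion hu (Seminorm.mem_ball_self _ (hr u hu)), ⟨u, rfl⟩⟩
    · rintro ⟨hy, u, rfl⟩
      obtain ⟨x, hx, hyx⟩ := Set.mem_iUnion₂.mp hy
      refine ⟨u, hball x hx ?_, rfl⟩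
      rw [Seminorm.mem_ball]
      calc q x (u - x) ≤ p x (L (u - x)) := hple x _
        _ = p x (L u - L x) := by rw [map_sub]
        _ < r x := (Seminorm.mem_ball _).mp hyx
end

section
/- (Characterization of real analyticity by factorial derivative bounds.) Let E be a finite-dimensional real normed vector space, let U ⊆ E be open, and let f : E → ℝ satisfy ContDiffOn ℝ ⊤ f U. Then f is real analytic on U (AnalyticOnNhd ℝ f U) if and only if for every compact set K ⊆ U there exist C > 0 and r > 0 such that ‖iteratedFDerivWithin ℝ m f U x‖ ≤ C * m ! / r ^ m for every m ∈ ℕ and every x ∈ K. -/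
open scoped Topology NNReal ENNReal
open Set Metric Filter Nat

section aux

variable {𝕜 : Type*} [NontriviallyNormedField 𝕜]

lemma card_finset_fin_card_eq (k l : ℕ) :
    Fintype.card {s : Finset (Fin (k + l)) // s.card = l} = (k + l).choose l := by
  rw [Fintype.card_subtype, ← Finset.powerset_univ, ← Finset.powersetCard_eq_filter,
    Finset.card_powersetCard, ← Fintype.card, Fintype.card_fin]

lemma norm_changeOriginSeries_le {E F : Type*} [NormedAddCommGroup E] [NormedSpace ℝ E]
    [NormedAddCommGroup F] [NormedSpace ℝ F]
    (p : FormalMultilinearSeries ℝ E F) (k l : ℕ) :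
    ‖p.changeOriginSeries k l‖ ≤ ((k + l).choose l : ℝ) * ‖p (k + l)‖ := by
  rw [FormalMultilinearSeries.changeOriginSeries]
  refine (norm_sum_le Finset.univ
    (fun s : {s : Finset (Fin (k + l)) // s.card = l} =>
      p.changeOriginSeriesTerm k l s.1 s.2)).trans ?_
  have : ∀ s : {s : Finset (Fin (k + l)) // s.card = l},
      ‖p.changeOriginSeriesTerm k l s.1 s.2‖ = ‖p (k + l)‖ := fun s =>
    p.norm_changeOriginSeriesTerm k l s.1 s.2
  rw [Finset.sum_congr rfl (fun s _ => this s), Finset.sum_const, Finset.card_univ,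
    card_finset_fin_card_eq, nsmul_eq_mul]

lemma norm_derivSeries_le {E F : Type*} [NormedAddCommGroup E] [NormedSpace ℝ E]
    [NormedAddCommGroup F] [NormedSpace ℝ F]
    (p : FormalMultilinearSeries ℝ E F) (n : ℕ) :
    ‖p.derivSeries n‖ ≤ (n + 1 : ℝ) * ‖p (n + 1)‖ := by
  rw [FormalMultilinearSeries.derivSeries, ContinuousLinearMap.compFormalMultilinearSeries_apply]
  refine (ContinuousLinearMap.norm_compContinuousMultilinearMap_le _ _).trans ?_
  have h1 : ‖((continuousMultilinearCurryFin1 ℝ E F).toLinearIsometry.toContinuousLinearMap :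
      (E[×1]→L[ℝ] F) →L[ℝ] E →L[ℝ] F)‖ ≤ 1 :=
    (continuousMultilinearCurryFin1 ℝ E F).toLinearIsometry.norm_toContinuousLinearMap_le
  have h2 : ‖p.changeOriginSeries 1 n‖ ≤ (n + 1 : ℝ) * ‖p (n + 1)‖ := by
    have := norm_changeOriginSeries_le p 1 n
    have hc : (1 + n).choose n = n + 1 := by
      rw [Nat.add_comm 1 n, Nat.choose_succ_self_right]
    rw [hc] at this
    rw [Nat.add_comm 1 n] at this
    exact_mod_cast this
  calc ‖((continuousMultilinearCurryFin1 ℝ E F : (E[×1]→L[ℝ] F) →L[ℝ] E →L[ℝ] F))‖ *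
        ‖p.changeOriginSeries 1 n‖ ≤ 1 * ((n + 1 : ℝ) * ‖p (n + 1)‖) := by
        exact mul_le_mul h1 h2 (norm_nonneg (p.changeOriginSeries 1 n)) zero_le_one
    _ = (n + 1 : ℝ) * ‖p (n + 1)‖ := one_mul _

end aux

universe u v

section lemA

theorem aux_norm_iteratedFDeriv_le' : ∀ (n : ℕ) {E : Type u} [NormedAddCommGroup E]
    [NormedSpace ℝ E] {F : Type max u v} [NormedAddCommGroup F] [NormedSpace ℝ F]
    [CompleteSpace F] {g : E → F} {q : FormalMultilinearSeries ℝ E F} {y : E} {ρ : ℝ≥0∞},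
    HasFPowerSeriesOnBall g q y ρ →
    ‖iteratedFDeriv ℝ n g y‖ ≤ (n.factorial : ℝ) * ‖q n‖ := by
  intro n
  induction n with
  | zero =>
    intro E _ _ F _ _ _ g q y ρ hg
    rw [norm_iteratedFDeriv_zero]
    have h0 : g y = q 0 (fun _ => 0) := (hg.coeff_zero _).symm
    rw [h0]
    simpa using (q 0).le_opNorm (fun _ => 0)
  | succ n ih =>
    intro E _ _ F _ _ _ g q y ρ hg
    rw [← norm_iteratedFDeriv_fderiv]
    calc ‖iteratedFDeriv ℝ n (fderiv ℝ g) y‖ ≤ (n.factorial : ℝ) * ‖q.derivSeries n‖ :=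
          ih hg.fderiv
      _ ≤ (n.factorial : ℝ) * ((n + 1 : ℝ) * ‖q (n + 1)‖) := by
          exact mul_le_mul_of_nonneg_left (norm_derivSeries_le q n) (by positivity)
      _ = ((n + 1).factorial : ℝ) * ‖q (n + 1)‖ := by
          rw [Nat.factorial_succ]; push_cast; ring

theorem aux_norm_iteratedFDeriv_le (n : ℕ) {E : Type u} [NormedAddCommGroup E]
    [NormedSpace ℝ E] {F : Type v} [NormedAddCommGroup F] [NormedSpace ℝ F]
    [CompleteSpace F] {g : E → F} {q : FormalMultilinearSeries ℝ E F} {y : E} {ρ : ℝ≥0∞}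
    (hg : HasFPowerSeriesOnBall g q y ρ) :
    ‖iteratedFDeriv ℝ n g y‖ ≤ (n.factorial : ℝ) * ‖q n‖ := by
  cases n with
  | zero =>
    rw [norm_iteratedFDeriv_zero]
    have h0 : g y = q 0 (fun _ => 0) := (hg.coeff_zero _).symm
    rw [h0]
    simpa using (q 0).le_opNorm (fun _ => 0)
  | succ n =>
    rw [← norm_iteratedFDeriv_fderiv]
    calc ‖iteratedFDeriv ℝ n (fderiv ℝ g) y‖ ≤ (n.factorial : ℝ) * ‖q.derivSeries n‖ :=
          aux_norm_iteratedFDeriv_le' n hg.fderiv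
      _ ≤ (n.factorial : ℝ) * ((n + 1 : ℝ) * ‖q (n + 1)‖) :=
          mul_le_mul_of_nonneg_left (norm_derivSeries_le q n) (by positivity)
      _ = ((n + 1).factorial : ℝ) * ‖q (n + 1)‖ := by
          rw [Nat.factorial_succ]; push_cast; ring

end lemA

section cauchy

variable {E : Type*} [NormedAddCommGroup E] [NormedSpace ℝ E]

lemma norm_changeOrigin_le_aux {F : Type*} [NormedAddCommGroup F] [NormedSpace ℝ F]
    (p : FormalMultilinearSeries ℝ E F) {a C : ℝ} (ha : 0 < a) (hC : 0 ≤ C)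
    (hp : ∀ n, ‖p n‖ * a ^ n ≤ C) {z : E} (hz : ‖z‖ ≤ a / 4) (k : ℕ) :
    ‖p.changeOrigin z k‖ ≤ (2 * C) * (2 / a) ^ k := by
  have hterm : ∀ l : ℕ, ‖p.changeOriginSeries k l (fun _ => z)‖ ≤
      (C * (2 / a) ^ k) * (1 / 2) ^ l := by
    intro l
    have h1 : ‖p.changeOriginSeries k l (fun _ => z)‖ ≤ ‖p.changeOriginSeries k l‖ * ‖z‖ ^ l := by
      simpa using (p.changeOriginSeries k l).le_opNorm (fun _ => z)
    have h2 : ‖p.changeOriginSeries k l‖ ≤ ((k + l).choose l : ℝ) * ‖p (k + l)‖ :=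
      norm_changeOriginSeries_le p k l
    have hchoose : ((k + l).choose l : ℝ) ≤ 2 ^ (k + l) := by
      have : (k + l).choose l ≤ 2 ^ (k + l) := by
        calc (k + l).choose l ≤ ∑ i ∈ Finset.range (k + l + 1), (k + l).choose i :=
              Finset.single_le_sum (fun i _ => Nat.zero_le _)
                (Finset.mem_range.2 (by omega))
          _ = 2 ^ (k + l) := Nat.sum_range_choose (k + l)
      exact_mod_cast this
    have hp' : ‖p (k + l)‖ ≤ C / a ^ (k + l) := by
      rw [le_div_iff₀ (pow_pos ha _)]
      exact hp (k + l)
    have hzl : ‖z‖ ^ l ≤ (a / 4) ^ l :=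
      pow_le_pow_left₀ (norm_nonneg _) hz l
    calc ‖p.changeOriginSeries k l (fun _ => z)‖
        ≤ (((k + l).choose l : ℝ) * ‖p (k + l)‖) * ‖z‖ ^ l := by
          refine h1.trans (mul_le_mul_of_nonneg_right h2 (by positivity))
      _ ≤ ((2 : ℝ) ^ (k + l) * (C / a ^ (k + l))) * (a / 4) ^ l := by
          refine mul_le_mul ?_ hzl (by positivity) (by positivity)
          exact mul_le_mul hchoose hp' (norm_nonneg _) (by positivity)
      _ = (C * (2 / a) ^ k) * (1 / 2) ^ l := by
          have ha' : a ≠ 0 := ne_of_gt ha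
          have h4 : ((2:ℝ) ^ l) ^ 2 = 4 ^ l := by
            rw [← pow_mul, mul_comm, pow_mul]; norm_num
          field_simp
          ring_nf
          have e1 : a ^ k * a⁻¹ ^ k = 1 := by rw [← mul_pow, mul_inv_cancel₀ ha', one_pow]
          have e2 : (1/4:ℝ) ^ l * 2 ^ l = (1/2) ^ l := by rw [← mul_pow]; norm_num
          linear_combination (C * a ^ l * 2 ^ k) * e2 - (C * a ^ l * (1/2) ^ l * 2 ^ k) * e1
  have hgeo : HasSum (fun l : ℕ => (C * (2 / a) ^ k) * (1 / 2) ^ l) ((2 * C) * (2 / a) ^ k) := by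
    have := (hasSum_geometric_of_lt_one (by norm_num : (0:ℝ) ≤ 1/2)
      (by norm_num : (1:ℝ)/2 < 1)).mul_left (C * (2 / a) ^ k)
    rw [show (2 * C) * (2 / a) ^ k = C * (2 / a) ^ k * (1 - 1 / 2)⁻¹ by
      rw [show (1:ℝ) - 1/2 = 2⁻¹ by norm_num, inv_inv]; ring]
    exact this
  exact tsum_of_norm_bounded hgeo hterm

lemma local_cauchy_bound {f : E → ℝ} {x₀ : E} (hx : AnalyticAt ℝ f x₀) :
    ∃ ε > (0 : ℝ), ∃ C > (0 : ℝ), ∃ r > (0 : ℝ), ∀ y ∈ ball x₀ ε, ∀ m : ℕ,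
      ‖iteratedFDeriv ℝ m f y‖ ≤ C * (m.factorial : ℝ) / r ^ m := by
  obtain ⟨p, R, hp⟩ := hx
  obtain ⟨a, ha0, haR⟩ := ENNReal.lt_iff_exists_nnreal_btwn.1 hp.r_pos
  have ha0' : (0 : ℝ) < a := by exact_mod_cast ha0
  obtain ⟨C, hC, hCb⟩ := p.norm_mul_pow_le_of_lt_radius (haR.trans_le hp.r_le)
  refine ⟨a / 4, by positivity, 2 * C, by positivity, a / 2, by positivity, ?_⟩
  intro y hy m
  set z := y - x₀ with hz
  have hzn : ‖z‖ < (a : ℝ) / 4 := by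
    rw [hz, ← dist_eq_norm]
    exact hy
  have hzR : (‖z‖₊ : ℝ≥0∞) < R := by
    refine lt_trans ?_ haR
    rw [ENNReal.coe_lt_coe]
    have : ‖z‖ < (a : ℝ) := lt_of_lt_of_le hzn (by linarith)
    exact_mod_cast this
  have hq : HasFPowerSeriesOnBall f (p.changeOrigin z) y (R - ‖z‖₊) := by
    have := hp.changeOrigin hzR
    rwa [hz, add_sub_cancel] at this
  have h1 : ‖iteratedFDeriv ℝ m f y‖ ≤ (m.factorial : ℝ) * ‖p.changeOrigin z m‖ :=
    aux_norm_iteratedFDeriv_le m hq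
  have h2 : ‖p.changeOrigin z m‖ ≤ (2 * C) * (2 / a) ^ m :=
    norm_changeOrigin_le_aux p ha0' hC.le hCb hzn.le m
  calc ‖iteratedFDeriv ℝ m f y‖ ≤ (m.factorial : ℝ) * ((2 * C) * (2 / a) ^ m) :=
        h1.trans (mul_le_mul_of_nonneg_left h2 (by positivity))
    _ = 2 * C * (m.factorial : ℝ) / ((a : ℝ) / 2) ^ m := by
        rw [div_pow, div_pow, div_div_eq_mul_div, eq_div_iff (by positivity)]
        field_simp

end cauchy

section translate

variable {E F : Type*} [NormedAddCommGroup E] [NormedSpace ℝ E]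
  [NormedAddCommGroup F] [NormedSpace ℝ F]

lemma HasFTaylorSeriesUpToOn.comp_const_add {n : WithTop ℕ∞} {f : E → F}
    {p : E → FormalMultilinearSeries ℝ E F} {s : Set E}
    (hf : HasFTaylorSeriesUpToOn n f p s) (c : E) :
    HasFTaylorSeriesUpToOn n (fun z => f (c + z)) (fun z => p (c + z))
      ((fun z => c + z) ⁻¹' s) := by
  constructor
  · intro x hx
    exact hf.zero_eq _ hx
  · intro m hm x hx
    have hL : HasFDerivWithinAt (fun z : E => c + z) (ContinuousLinearMap.id ℝ E)
        ((fun z => c + z) ⁻¹' s) x := ((hasFDerivAt_id x).const_add c).hasFDerivWithinAt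
    have := (hf.fderivWithin m hm _ hx).comp x hL (mapsTo_preimage _ _)
    simpa [Function.comp_def] using this
  · intro m hm
    exact (hf.cont m hm).comp (continuous_const.add continuous_id).continuousOn
      (mapsTo_preimage _ _)

end translate

section suff

variable {E : Type*} [NormedAddCommGroup E] [NormedSpace ℝ E]

lemma analyticAt_of_factorial_bounds {U : Set E} (hU : IsOpen U) {f : E → ℝ}
    (hf : ContDiffOn ℝ (⊤ : ℕ∞) f U) {x : E} {δ C r : ℝ}
    (hδ : 0 < δ) (hball : closedBall x δ ⊆ U) (hC : 0 < C) (hr : 0 < r)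
    (hb : ∀ m : ℕ, ∀ z ∈ closedBall x δ,
      ‖iteratedFDerivWithin ℝ m f U z‖ ≤ C * (m.factorial : ℝ) / r ^ m) :
    AnalyticAt ℝ f x := by
  have hxU : x ∈ U := hball (mem_closedBall_self hδ.le)
  set t := min r δ with htdef
  have ht : 0 < t := lt_min hr hδ
  have htr : t ≤ r := min_le_left _ _
  have htδ : t ≤ δ := min_le_right _ _
  set p : FormalMultilinearSeries ℝ E ℝ :=
    fun n => ((n.factorial : ℝ))⁻¹ • iteratedFDerivWithin ℝ n f U x with hpdef
  have hpnorm : ∀ n : ℕ, ‖p n‖ ≤ C / r ^ n := by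
    intro n
    have h1 : ‖p n‖ = ((n.factorial : ℝ))⁻¹ * ‖iteratedFDerivWithin ℝ n f U x‖ := by
      show ‖((n.factorial : ℝ))⁻¹ • iteratedFDerivWithin ℝ n f U x‖ = _
      rw [norm_smul ((n.factorial : ℝ))⁻¹ (iteratedFDerivWithin ℝ n f U x),
        Real.norm_eq_abs, abs_inv, Nat.abs_cast]
    rw [h1]
    have h2 := hb n x (mem_closedBall_self hδ.le)
    rw [inv_mul_le_iff₀ (by positivity)]
    calc ‖iteratedFDerivWithin ℝ n f U x‖ ≤ C * (n.factorial : ℝ) / r ^ n := h2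
      _ = (n.factorial : ℝ) * (C / r ^ n) := by ring
  refine ⟨p, ENNReal.ofReal t, ?_, ENNReal.ofReal_pos.2 ht, ?_⟩
  · -- radius
    have : ENNReal.ofReal t = (t.toNNReal : ℝ≥0∞) := rfl
    rw [this]
    apply p.le_radius_of_bound C
    intro n
    rw [Real.coe_toNNReal _ ht.le]
    calc ‖p n‖ * t ^ n ≤ (C / r ^ n) * t ^ n :=
          mul_le_mul_of_nonneg_right (hpnorm n) (by positivity)
      _ = C * (t / r) ^ n := by rw [div_pow]; ring
      _ ≤ C * 1 := by
          refine mul_le_mul_of_nonneg_left ?_ hC.le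
          exact pow_le_one₀ (by positivity) (div_le_one_of_le₀ htr hr.le)
      _ = C := mul_one C
  · -- hasSum
    intro y hy
    have hyt : ‖y‖ < t := by
      rw [mem_emetric_ball_zero_iff] at hy
      have := (ENNReal.lt_ofReal_iff_toReal_lt (by simp)).1 hy
      simpa using this
    set θ : ℝ := ‖y‖ / t with hθdef
    have hθ0 : 0 ≤ θ := by positivity
    have hθ1 : θ < 1 := (div_lt_one ht).2 hyt
    -- the auxiliary one-variable function
    set L : ℝ →L[ℝ] E := ContinuousLinearMap.toSpanSingleton ℝ y with hLdef
    set g : ℝ → ℝ := (fun z => f (x + z)) ∘ ⇑L with hgdef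
    have hgval : ∀ u : ℝ, g u = f (x + u • y) := by
      intro u
      simp [hgdef, hLdef, ContinuousLinearMap.toSpanSingleton_apply]
    have hmaps : ∀ u ∈ Icc (0:ℝ) 1, x + u • y ∈ closedBall x δ := by
      intro u hu
      rw [mem_closedBall, dist_eq_norm]
      have : ‖x + u • y - x‖ = |u| * ‖y‖ := by
        rw [add_sub_cancel_left, norm_smul, Real.norm_eq_abs]
      rw [this]
      have hu1 : |u| ≤ 1 := abs_le.2 ⟨by linarith [hu.1], hu.2⟩
      calc |u| * ‖y‖ ≤ 1 * ‖y‖ := mul_le_mul_of_nonneg_right hu1 (norm_nonneg _)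
        _ = ‖y‖ := one_mul _
        _ ≤ δ := le_trans hyt.le htδ
    have hmapsU : ∀ u ∈ Icc (0:ℝ) 1, x + u • y ∈ U := fun u hu => hball (hmaps u hu)
    -- Taylor series of g on Icc 0 1
    have hP : HasFTaylorSeriesUpToOn (⊤ : ℕ∞) f (ftaylorSeriesWithin ℝ f U) U :=
      hf.ftaylorSeriesWithin hU.uniqueDiffOn
    have h1 := hP.comp_const_add x
    have h2 := h1.compContinuousLinearMap L
    have hsub : Icc (0:ℝ) 1 ⊆ ⇑L ⁻¹' ((fun z => x + z) ⁻¹' U) := by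
      intro u hu
      simp only [mem_preimage, hLdef, ContinuousLinearMap.toSpanSingleton_apply]
      exact hmapsU u hu
    have h3 := (h2.mono hsub :)
    have hder : ∀ (m : ℕ), ∀ u ∈ Icc (0:ℝ) 1,
        iteratedDerivWithin m g (Icc (0:ℝ) 1) u =
          (iteratedFDerivWithin ℝ m f U (x + u • y)) (fun _ => y) := by
      intro m u hu
      have hQ := h3.eq_iteratedFDerivWithin_of_uniqueDiffOn (m := m)
        (by exact_mod_cast (le_top : (m : ℕ∞) ≤ ⊤))
        (uniqueDiffOn_Icc one_pos) hu
      rw [iteratedDerivWithin_eq_iteratedFDerivWithin, ← hQ]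
      simp [ContinuousMultilinearMap.compContinuousLinearMap_apply, hLdef,
        ContinuousLinearMap.toSpanSingleton_apply, ftaylorSeriesWithin]
    have hgC : ContDiffOn ℝ (⊤ : ℕ∞) g (Icc (0:ℝ) 1) := by
      apply hf.comp
      · exact ((contDiff_const.add (contDiff_id.smul contDiff_const)).contDiffOn :
          ContDiffOn ℝ (⊤ : ℕ∞) (fun u : ℝ => x + u • y) (Icc (0:ℝ) 1))
      · intro u hu
        simp only [mem_preimage]
        exact hmapsU u hu
    -- norm bound on the derivatives of g
    have hnorm : ∀ (m : ℕ), ∀ u ∈ Icc (0:ℝ) 1,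
        ‖iteratedDerivWithin m g (Icc (0:ℝ) 1) u‖ ≤ C * (m.factorial : ℝ) * θ ^ m := by
      intro m u hu
      rw [hder m u hu]
      have h1 : ‖(iteratedFDerivWithin ℝ m f U (x + u • y)) (fun _ => y)‖ ≤
          ‖iteratedFDerivWithin ℝ m f U (x + u • y)‖ * ‖y‖ ^ m := by
        simpa using (iteratedFDerivWithin ℝ m f U (x + u • y)).le_opNorm (fun _ => y)
      have h2 : ‖iteratedFDerivWithin ℝ m f U (x + u • y)‖ ≤ C * (m.factorial : ℝ) / r ^ m :=
        hb m _ (hmaps u hu)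
      have h3 : C * (m.factorial : ℝ) / r ^ m ≤ C * (m.factorial : ℝ) / t ^ m := by
        apply div_le_div_of_nonneg_left (by positivity) (by positivity)
        exact pow_le_pow_left₀ ht.le htr m
      calc ‖(iteratedFDerivWithin ℝ m f U (x + u • y)) (fun _ => y)‖
          ≤ (C * (m.factorial : ℝ) / t ^ m) * ‖y‖ ^ m :=
            h1.trans (mul_le_mul_of_nonneg_right (h2.trans h3) (by positivity))
        _ = C * (m.factorial : ℝ) * θ ^ m := by
            rw [hθdef, div_pow]
            field_simp
    -- Taylor remainder estimate
    have hrem : ∀ n : ℕ, ‖∑ k ∈ Finset.range (n + 1), p k (fun _ => y) - f (x + y)‖ ≤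
        C * ((n + 1 : ℕ) : ℝ) * θ ^ (n + 1) := by
      intro n
      have htay := taylor_mean_remainder_bound (f := g) (a := 0) (b := 1) (n := n)
        (x := 1) zero_le_one (hgC.of_le (by exact_mod_cast le_top)) (right_mem_Icc.2 zero_le_one)
        (fun u hu => hnorm (n + 1) u hu)
      have hpart : taylorWithinEval g n (Icc (0:ℝ) 1) 0 1 =
          ∑ k ∈ Finset.range (n + 1), p k (fun _ => y) := by
        rw [taylor_within_apply]
        refine Finset.sum_congr rfl ?_
        intro k hk
        have h0 : (0 : ℝ) ∈ Icc (0:ℝ) 1 := left_mem_Icc.2 zero_le_one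
        rw [hder k 0 h0]
        have hx0 : x + (0:ℝ) • y = x := by simp
        rw [hx0, hpdef]
        simp [smul_smul]
      have hg1 : g 1 = f (x + y) := by rw [hgval]; simp
      rw [hpart, hg1] at htay
      have heq : C * ((n+1).factorial : ℝ) * θ ^ (n + 1) * (1 - 0) ^ (n + 1) / (n.factorial : ℝ) =
          C * ((n + 1 : ℕ) : ℝ) * θ ^ (n + 1) := by
        rw [Nat.factorial_succ]
        push_cast
        field_simp
        ring
      rw [heq] at htay
      rw [norm_sub_rev]
      exact htay
    -- summability of the series
    have hsummable : Summable (fun k : ℕ => p k (fun _ => y)) := by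
      apply Summable.of_norm_bounded (g := fun k : ℕ => C * θ ^ k)
      · exact (summable_geometric_of_lt_one hθ0 hθ1).mul_left C
      · intro k
        have h1 : ‖p k (fun _ => y)‖ ≤ ‖p k‖ * ‖y‖ ^ k := by
          simpa using (p k).le_opNorm (fun _ => y)
        have h2 : ‖p k‖ ≤ C / t ^ k := by
          refine (hpnorm k).trans ?_
          apply div_le_div_of_nonneg_left hC.le (by positivity)
          exact pow_le_pow_left₀ ht.le htr k
        calc ‖p k (fun _ => y)‖ ≤ (C / t ^ k) * ‖y‖ ^ k :=
              h1.trans (mul_le_mul_of_nonneg_right h2 (by positivity))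
          _ = C * θ ^ k := by rw [hθdef, div_pow]; field_simp
    -- limit of partial sums
    have hlim : Tendsto (fun n : ℕ => ∑ k ∈ Finset.range n, p k (fun _ => y)) atTop
        (𝓝 (f (x + y))) := by
      rw [← tendsto_add_atTop_iff_nat 1]
      rw [tendsto_iff_norm_sub_tendsto_zero]
      have hθabs : ‖θ‖ < 1 := by rwa [Real.norm_eq_abs, abs_of_nonneg hθ0]
      have hsum2 : Summable (fun n : ℕ => C * (((n:ℝ)) ^ 1 * θ ^ n)) :=
        (summable_pow_mul_geometric_of_norm_lt_one 1 hθabs).mul_left C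
      have h0 := hsum2.tendsto_atTop_zero
      have h0' := h0.comp (tendsto_add_atTop_nat 1)
      have h0'' : Tendsto (fun n : ℕ => C * (((n + 1 : ℕ) : ℝ)) * θ ^ (n + 1)) atTop (𝓝 0) := by
        have hfun : (fun n : ℕ => C * (((n + 1 : ℕ) : ℝ)) * θ ^ (n + 1)) =
            (fun m : ℕ => C * ((m : ℝ) ^ 1 * θ ^ m)) ∘ (fun n : ℕ => n + 1) := by
          funext n
          simp only [Function.comp]
          push_cast
          ring
        rw [hfun]
        exact h0'
      exact squeeze_zero (fun n => norm_nonneg _) (fun n => hrem n) h0''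
    have := hsummable.hasSum
    have htsum : (∑' k : ℕ, p k (fun _ => y)) = f (x + y) :=
      tendsto_nhds_unique this.tendsto_sum_nat hlim
    rwa [htsum] at this

end suff

/-- Characterization of real analyticity by factorial derivative bounds: a `C^∞` function
`f` on an open set `U` in a finite-dimensional real normed space is real analytic on `U` if
and only if, on every compact `K ⊆ U`, there are `C, r > 0` with
`‖iteratedFDerivWithin ℝ m f U x‖ ≤ C m! / rᵐ` for all `m` and all `x ∈ K`. -/
theorem analyticOnNhd_iff_factorial_bounds
    (E : Type*) [NormedAddCommGroup E] [NormedSpace ℝ E] [FiniteDimensional ℝ E]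
    (U : Set E) (hU : IsOpen U) (f : E → ℝ) (hf : ContDiffOn ℝ (⊤ : ℕ∞) f U) :
    AnalyticOnNhd ℝ f U ↔
      ∀ K : Set E, K ⊆ U → IsCompact K →
        ∃ C > (0 : ℝ), ∃ r > (0 : ℝ), ∀ (m : ℕ), ∀ x ∈ K,
          ‖iteratedFDerivWithin ℝ m f U x‖ ≤ C * (m.factorial : ℝ) / r ^ m := by
  constructor
  · -- analytic implies bounds
    intro hA K hKU hK
    have hloc : ∀ x ∈ K, ∃ ε > (0 : ℝ), ∃ C > (0 : ℝ), ∃ r > (0 : ℝ),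
        ∀ y ∈ ball x ε, ∀ m : ℕ, ‖iteratedFDeriv ℝ m f y‖ ≤ C * (m.factorial : ℝ) / r ^ m :=
      fun x hx => local_cauchy_bound (hA x (hKU hx))
    choose! ε hε C hC r hr hb using hloc
    obtain ⟨s, hsK, hcover⟩ := hK.elim_nhds_subcover (fun x => ball x (ε x))
      (fun x hx => ball_mem_nhds x (hε x hx))
    rcases s.eq_empty_or_nonempty with hs | hs
    · refine ⟨1, one_pos, 1, one_pos, fun m x hx => absurd (hcover hx) (by simp [hs])⟩
    · set C₀ : ℝ := s.sup' hs C with hC₀def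
      set r₀ : ℝ := s.inf' hs r with hr₀def
      have hC₀pos : 0 < C₀ := by
        obtain ⟨x₀, hx₀⟩ := hs
        exact lt_of_lt_of_le (hC x₀ (hsK x₀ hx₀)) (Finset.le_sup' C hx₀)
      have hr₀pos : 0 < r₀ := by
        rw [hr₀def]
        rw [Finset.lt_inf'_iff]
        exact fun i hi => hr i (hsK i hi)
      refine ⟨C₀, hC₀pos, r₀, hr₀pos, fun m x hx => ?_⟩
      obtain ⟨i, hi, hxi⟩ := Set.mem_iUnion₂.1 (hcover hx)
      have hik := hsK i hi
      have heq : iteratedFDerivWithin ℝ m f U x = iteratedFDeriv ℝ m f x :=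
        iteratedFDerivWithin_of_isOpen m hU (hKU hx)
      rw [heq]
      calc ‖iteratedFDeriv ℝ m f x‖ ≤ C i * (m.factorial : ℝ) / r i ^ m :=
            hb i hik x hxi m
        _ ≤ C₀ * (m.factorial : ℝ) / r₀ ^ m := by
            apply div_le_div₀ (by positivity)
            · exact mul_le_mul_of_nonneg_right (Finset.le_sup' C hi) (by positivity)
            · positivity
            · exact pow_le_pow_left₀ hr₀pos.le (Finset.inf'_le r hi) m
  · -- bounds imply analytic
    intro hB x hx
    obtain ⟨δ', hδ', hδU⟩ := Metric.isOpen_iff.1 hU x hx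
    set δ := δ' / 2 with hδdef
    have hδpos : 0 < δ := by positivity
    have hball : closedBall x δ ⊆ U :=
      (closedBall_subset_ball (by rw [hδdef]; linarith)).trans hδU
    obtain ⟨C, hC, r, hr, hb⟩ := hB (closedBall x δ) hball (isCompact_closedBall x δ)
    exact analyticAt_of_factorial_bounds hU hf hδpos hball hC hr
      (fun m z hz => hb m z hz)
end

section
/- (Jet-norm estimate for composition with a real analytic map.) Let p, q ∈ ℕ, let U ⊆ (Fin p → ℝ) and V ⊆ (Fin q → ℝ) be open sets, and let Φ : (Fin p → ℝ) → (Fin q → ℝ) satisfy AnalyticOnNhd ℝ Φ U and Φ '' U ⊆ V. Then for every compact set K ⊆ U there exist C > 0 and σ > 0 such that for every f : (Fin q → ℝ) → ℝ with ContDiffOn ℝ ⊤ f V, every m ∈ ℕ, and every x ∈ K: Σ_{j=0}^{m} ‖iteratedFDerivWithin ℝ j (f ∘ Φ) U x‖ / j ! ≤ C * σ^(−m) * Σ_{j=0}^{m} ‖iteratedFDerivWithin ℝ j f V (Φ x)‖ / j !. -/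
set_option maxHeartbeats 1600000

open FormalMultilinearSeries ENNReal NNReal OrderedFinpartition Function


open FormalMultilinearSeries

lemma my_choose_le_two_pow (n k : ℕ) : (n.choose k) ≤ 2 ^ n := by
  rcases le_or_gt k n with h | h
  · calc n.choose k ≤ ∑ i ∈ Finset.range (n+1), n.choose i :=
        Finset.single_le_sum (fun i _ => Nat.zero_le _) (Finset.mem_range.2 (Nat.lt_succ_of_le h))
    _ = 2 ^ n := Nat.sum_range_choose n
  · simp [Nat.choose_eq_zero_of_lt h]

lemma my_derivSeries_norm_le {E F : Type*} [NormedAddCommGroup E] [NormedSpace ℝ E]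
    [NormedAddCommGroup F] [NormedSpace ℝ F] (p : FormalMultilinearSeries ℝ E F) (k : ℕ) :
    ‖p.derivSeries k‖ ≤ (k+1) * ‖p (k+1)‖ := by
  have h1 : ‖p.changeOriginSeries 1 k‖ ≤ (k+1) * ‖p (k+1)‖ := by
    have := p.nnnorm_changeOriginSeries_le_tsum 1 k
    have hcard : Fintype.card { s : Finset (Fin (1 + k)) // s.card = k } = k + 1 := by
      rw [Fintype.card_subtype, ← Finset.powerset_univ, ← Finset.powersetCard_eq_filter,
        Finset.card_powersetCard, Finset.card_univ, Fintype.card_fin, add_comm,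
        Nat.choose_succ_self_right]
    rw [tsum_fintype] at this
    have := (NNReal.coe_le_coe.2 this)
    push_cast at this
    simp only [Finset.sum_const, nsmul_eq_mul, Finset.card_univ, hcard] at this
    calc ‖p.changeOriginSeries 1 k‖ ≤ (k+1 : ℝ) * ‖p (1 + k)‖ := by exact_mod_cast this
    _ = (k+1) * ‖p (k+1)‖ := by rw [add_comm 1 k]
  refine ContinuousMultilinearMap.opNorm_le_bound (by positivity) fun v => ?_
  calc ‖p.derivSeries k v‖ = ‖p.changeOriginSeries 1 k v‖ := by
        simp only [derivSeries, ContinuousLinearMap.compFormalMultilinearSeries_apply,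
          ContinuousLinearMap.compContinuousMultilinearMap_coe, Function.comp_apply,
          ContinuousLinearEquiv.coe_coe]
        exact (continuousMultilinearCurryFin1 ℝ E F).norm_map _
  _ ≤ ‖p.changeOriginSeries 1 k‖ * ∏ i, ‖v i‖ := ContinuousMultilinearMap.le_opNorm _ _
  _ ≤ (k+1) * ‖p (k+1)‖ * ∏ i, ‖v i‖ := by
      gcongr

universe u v

lemma my_cauchy_aux {E : Type u} [NormedAddCommGroup E] [NormedSpace ℝ E] :
    ∀ (n : ℕ) {F : Type (max u v)} [NormedAddCommGroup F] [NormedSpace ℝ F] [CompleteSpace F]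
      (f : E → F) (pp : FormalMultilinearSeries ℝ E F) (x : E) (r : ℝ≥0∞)
      (_hf : HasFPowerSeriesOnBall f pp x r) (C B : ℝ) (j : ℕ) (_hC : 0 ≤ C) (_hB : 0 ≤ B)
      (_hp : ∀ k, ‖pp k‖ ≤ C * B^k * ((k+j).choose k)) (y : E) (_hy : y ∈ EMetric.ball x r)
      (_hyB : ‖y - x‖ * B ≤ 1/4),
      ‖iteratedFDeriv ℝ n f y‖ ≤ 2 * C * 2^j * (2*B)^n * (((n+j).choose j : ℝ) * n.factorial) := by
  intro n
  induction n with
  | zero =>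
    intro F _ _ _ f pp x r hf C B j hC hB hp y hy hyB
    have hy' : y - x ∈ Metric.eball (0:E) r := by
      rw [Metric.mem_eball, edist_eq_enorm_sub, sub_zero]
      change edist y x < r at hy
      rwa [edist_eq_enorm_sub] at hy
    have hsum : HasSum (fun k => pp k fun _ => y - x) (f (x + (y - x))) := hf.hasSum hy'
    have hmaj : ∀ k, ‖pp k fun _ => y - x‖ ≤ C * 2^j * (1/2)^k := by
      intro k
      calc ‖pp k fun _ => y - x‖ ≤ ‖pp k‖ * ∏ _i : Fin k, ‖y - x‖ :=
            ContinuousMultilinearMap.le_opNorm _ _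
      _ = ‖pp k‖ * ‖y - x‖^k := by simp
      _ ≤ (C * B^k * ((k+j).choose k)) * ‖y - x‖^k := by
            gcongr; exact hp k
      _ = C * ((k+j).choose k) * (‖y - x‖ * B)^k := by ring
      _ ≤ C * (2:ℝ)^(k+j) * (‖y - x‖ * B)^k := by
            have : ((k+j).choose k : ℝ) ≤ (2:ℝ)^(k+j) := by
              exact_mod_cast my_choose_le_two_pow (k+j) k
            have h0 : (0:ℝ) ≤ (‖y - x‖ * B)^k := by positivity
            exact mul_le_mul_of_nonneg_right (mul_le_mul_of_nonneg_left this hC) h0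
      _ ≤ C * (2:ℝ)^(k+j) * (1/4 : ℝ)^k := by gcongr
      _ = C * 2^j * (1/2)^k := by
            rw [pow_add, show (1/2:ℝ) = 2*(1/4) by norm_num, mul_pow]; ring
    have hsummaj : Summable (fun k : ℕ => C * 2^j * (1/2:ℝ)^k) :=
      (summable_geometric_of_lt_one (by norm_num) (by norm_num)).mul_left _
    have hsumnorm : Summable (fun k => ‖pp k fun _ => y - x‖) :=
      Summable.of_nonneg_of_le (fun k => norm_nonneg _) hmaj hsummaj
    have h0 : ‖iteratedFDeriv ℝ 0 f y‖ = ‖f y‖ := norm_iteratedFDeriv_zero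
    have hxy : x + (y - x) = y := by abel
    have hkey : ‖f (x + (y - x))‖ ≤ C * 2^j * 2 :=
      calc ‖f (x + (y - x))‖ = ‖∑' k, pp k fun _ => y - x‖ := by rw [hsum.tsum_eq]
      _ ≤ ∑' k, ‖pp k fun _ => y - x‖ := norm_tsum_le_tsum_norm hsumnorm
      _ ≤ ∑' k, C * 2^j * (1/2:ℝ)^k := Summable.tsum_le_tsum hmaj hsumnorm hsummaj
      _ = C * 2^j * ∑' k, (1/2:ℝ)^k := tsum_mul_left
      _ = C * 2^j * 2 := by
          rw [tsum_geometric_of_lt_one (by norm_num) (by norm_num)]; norm_num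
    rw [h0, ← hxy]
    simp only [Nat.zero_add, Nat.choose_self, Nat.factorial_zero, pow_zero, Nat.cast_one]
    linarith
  | succ n ih =>
    intro F _ _ _ f pp x r hf C B j hC hB hp y hy hyB
    have hstep : ∀ k, ‖pp.derivSeries k‖ ≤ (C*B*(j+1)) * B^k * ((k+(j+1)).choose k) := by
      intro k
      have h1 := my_derivSeries_norm_le pp k
      have h2 := hp (k+1)
      have hid : ((k+1+j).choose (k+1)) * (k+1) = ((k+1+j).choose k) * (j+1) := by
        have h := Nat.choose_succ_right_eq (k+1+j) k
        have h2 : k+1+j-k = j+1 := by omega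
        rw [h2] at h
        exact h
      calc ‖pp.derivSeries k‖ ≤ (k+1) * ‖pp (k+1)‖ := h1
      _ ≤ (k+1) * (C * B^(k+1) * ((k+1+j).choose (k+1))) := by gcongr
      _ = C * B^(k+1) * (((k+1+j).choose (k+1) : ℝ) * (k+1)) := by ring
      _ = C * B^(k+1) * (((k+1+j).choose k : ℝ) * (j+1)) := by
            have hR : ((k+1+j).choose (k+1) : ℝ) * (k+1) = ((k+1+j).choose k : ℝ) * (j+1) := by
              exact_mod_cast hid
            rw [hR]
      _ = (C*B*(j+1)) * B^k * ((k+(j+1)).choose k) := by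
            have hrw : k + (j+1) = k+1+j := by omega
            rw [hrw, pow_succ]; ring
    have := ih (fderiv ℝ f) pp.derivSeries x r hf.fderiv (C*B*(j+1)) B (j+1)
      (by positivity) hB hstep y hy hyB
    rw [norm_iteratedFDeriv_fderiv] at this
    calc ‖iteratedFDeriv ℝ (n+1) f y‖
        ≤ 2 * (C*B*(j+1)) * 2^(j+1) * (2*B)^n * (((n+(j+1)).choose (j+1) : ℝ) * n.factorial) :=
          this
    _ = 2 * C * 2^j * (2*B)^(n+1) * (((n+1+j).choose j : ℝ) * (n+1).factorial) := by
          have hid : ((n+j+1).choose (j+1)) * (j+1) = ((n+j+1).choose j) * (n+1) := by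
            have h := Nat.choose_succ_right_eq (n+j+1) j
            have h2 : n+j+1-j = n+1 := by omega
            rw [h2] at h
            exact h
          have hidR : ((n+j+1).choose (j+1) : ℝ) * (j+1) = ((n+j+1).choose j : ℝ) * (n+1) := by
            exact_mod_cast hid
          have h1 : n+(j+1) = n+j+1 := by omega
          have h2 : n+1+j = n+j+1 := by omega
          rw [h1, h2]
          push_cast [Nat.factorial_succ]
          linear_combination (4*C*B*2^j*(2*B)^n*(n.factorial:ℝ)) * hidR

lemma my_uniform_bound {E : Type u} {F : Type (max u v)} [NormedAddCommGroup E] [NormedSpace ℝ E]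
    [NormedAddCommGroup F] [NormedSpace ℝ F] [CompleteSpace F] {Φ : E → F} {K : Set E}
    (hK : IsCompact K) (hΦ : ∀ x ∈ K, AnalyticAt ℝ Φ x) :
    ∃ A b : ℝ, 0 < A ∧ 1 ≤ b ∧
      ∀ y ∈ K, ∀ n : ℕ, ‖iteratedFDeriv ℝ n Φ y‖ ≤ n.factorial * (A * b^n) := by
  have step : ∀ x ∈ K, ∃ ε C b : ℝ, 0 < ε ∧ 0 < C ∧ 1 ≤ b ∧
      ∀ y ∈ Metric.ball x ε, ∀ n : ℕ,
        ‖iteratedFDeriv ℝ n Φ y‖ ≤ n.factorial * (C * b^n) := by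
    intro x hx
    obtain ⟨pser, r, hr⟩ := hΦ x hx
    obtain ⟨r', hr'0, hr'r⟩ := ENNReal.lt_iff_exists_nnreal_btwn.1 hr.r_pos
    obtain ⟨C, hC0, hCb⟩ := pser.norm_mul_pow_le_of_lt_radius (lt_of_lt_of_le hr'r hr.r_le)
    have hr'pos : (0:ℝ) < (r' : ℝ) := by exact_mod_cast hr'0
    set B : ℝ := ((r' : ℝ))⁻¹ with hB
    have hBpos : 0 < B := by positivity
    have hp' : ∀ k, ‖pser k‖ ≤ C * B^k * (((k+0).choose k : ℕ) : ℝ) := by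
      intro k
      have h1 : ‖pser k‖ * (r':ℝ)^k ≤ C := hCb k
      have h2 : ‖pser k‖ ≤ C * B^k := by
        rw [hB, inv_pow (r':ℝ) k]
        calc ‖pser k‖ = ‖pser k‖ * (r':ℝ)^k * ((r':ℝ)^k)⁻¹ := by field_simp
        _ ≤ C * ((r':ℝ)^k)⁻¹ := by gcongr
      simpa using h2
    refine ⟨(r':ℝ)/4, 2*C, max 1 (2*B), by positivity, by positivity, le_max_left _ _, ?_⟩
    intro y hy n
    have hyx : ‖y - x‖ < (r':ℝ)/4 := by
      rw [Metric.mem_ball, dist_eq_norm] at hy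
      exact hy
    have hyball : y ∈ EMetric.ball x r := by
      have hd : dist y x < (r' : ℝ) := by
        rw [dist_eq_norm]; nlinarith [hyx, hr'pos]
      have h1 : edist y x < (r' : ℝ≥0∞) := by
        rw [edist_dist, ← ENNReal.ofReal_coe_nnreal]
        exact (ENNReal.ofReal_lt_ofReal_iff_of_nonneg dist_nonneg).2 hd
      exact EMetric.mem_ball.2 (h1.trans hr'r)
    have hyB : ‖y - x‖ * B ≤ 1/4 := by
      rw [hB]
      rw [mul_inv_le_iff₀ hr'pos]
      nlinarith [hyx, norm_nonneg (y - x)]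
    have := my_cauchy_aux.{u, v} n Φ pser x r hr C B 0 (le_of_lt hC0) (le_of_lt hBpos)
      hp' y hyball hyB
    simp only [pow_zero, Nat.add_zero, Nat.choose_zero_right, Nat.cast_one, one_mul, mul_one] at this
    calc ‖iteratedFDeriv ℝ n Φ y‖ ≤ 2 * C * (2*B)^n * (n.factorial : ℝ) := by
          convert this using 2 <;> ring
    _ ≤ 2 * C * (max 1 (2*B))^n * (n.factorial : ℝ) := by
          gcongr
          exact le_max_right _ _
    _ = (n.factorial : ℝ) * (2*C * (max 1 (2*B))^n) := by ring
  choose ε Cc bb hε hCc hbb hbound using step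
  obtain ⟨t, ht⟩ := hK.elim_nhds_subcover' (fun x hx => Metric.ball x (ε x hx))
    (fun x hx => Metric.ball_mem_nhds x (hε x hx))
  classical
  refine ⟨1 + ∑ x ∈ t, Cc x.1 x.2, 1 + ∑ x ∈ t, bb x.1 x.2, ?_, ?_, ?_⟩
  · have : (0:ℝ) ≤ ∑ x ∈ t, Cc x.1 x.2 :=
      Finset.sum_nonneg fun x _ => le_of_lt (hCc x.1 x.2)
    linarith
  · have : (0:ℝ) ≤ ∑ x ∈ t, bb x.1 x.2 :=
      Finset.sum_nonneg fun x _ => le_trans zero_le_one (hbb x.1 x.2)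
    linarith
  · intro y hy n
    obtain ⟨x, hxt, hyx⟩ := Set.mem_iUnion₂.1 (ht hy)
    have h1 := hbound x.1 x.2 y hyx n
    have hCle : Cc x.1 x.2 ≤ 1 + ∑ z ∈ t, Cc z.1 z.2 := by
      have : Cc x.1 x.2 ≤ ∑ z ∈ t, Cc z.1 z.2 :=
        Finset.single_le_sum (fun z _ => le_of_lt (hCc z.1 z.2)) hxt
      linarith
    have hble : bb x.1 x.2 ≤ 1 + ∑ z ∈ t, bb z.1 z.2 := by
      have : bb x.1 x.2 ≤ ∑ z ∈ t, bb z.1 z.2 :=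
        Finset.single_le_sum (fun z _ => le_trans zero_le_one (hbb z.1 z.2)) hxt
      linarith
    have hb0 : (0:ℝ) ≤ bb x.1 x.2 := le_trans zero_le_one (hbb x.1 x.2)
    calc ‖iteratedFDeriv ℝ n Φ y‖ ≤ n.factorial * (Cc x.1 x.2 * (bb x.1 x.2)^n) := h1
    _ ≤ n.factorial * ((1 + ∑ z ∈ t, Cc z.1 z.2) * ((1 + ∑ z ∈ t, bb z.1 z.2))^n) := by
        have hCpos : (0:ℝ) ≤ ∑ z ∈ t, Cc z.1 z.2 :=
          Finset.sum_nonneg fun z _ => le_of_lt (hCc z.1 z.2)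
        gcongr


open OrderedFinpartition Function

lemma my_ofp0 (a b : OrderedFinpartition 0) : a = b := by
  have ha : a.length = 0 := Nat.le_zero.1 a.length_le
  have hb : b.length = 0 := Nat.le_zero.1 b.length_le
  obtain ⟨la, pa, hpa, ea, hea1, hea2, hea3, hea4⟩ := a
  obtain ⟨lb, pb, hpb, eb, heb1, heb2, heb3, heb4⟩ := b
  simp only at ha hb
  subst ha hb
  have h1 : pa = pb := funext fun i => i.elim0
  subst h1
  have h2 : ea = eb := funext fun i => i.elim0
  subst h2
  rfl

lemma my_sum_partSize {n : ℕ} (c : OrderedFinpartition n) : ∑ m, c.partSize m = n := by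
  have := c.sum_sigma_eq_sum (fun _ => (1:ℕ))
  simpa using this

noncomputable def myW (A : ℝ) (n : ℕ) : ℝ :=
  ∑ c : OrderedFinpartition n,
    A^c.length * ((c.length).factorial : ℝ) * ∏ i, ((c.partSize i).factorial : ℝ)

lemma myW_zero (A : ℝ) : myW A 0 = 1 := by
  have huniv : (Finset.univ : Finset (OrderedFinpartition 0)) = {atomic 0} :=
    Finset.eq_singleton_iff_unique_mem.2 ⟨Finset.mem_univ _, fun x _ => my_ofp0 x _⟩
  rw [myW, huniv, Finset.sum_singleton]
  simp [atomic]

lemma myW_succ (A : ℝ) (hA : 0 ≤ A) (n : ℕ) :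
    myW A (n+1) ≤ (A+2) * (n+1) * myW A n := by
  classical
  have hsum : myW A (n+1) = ∑ c : OrderedFinpartition n, ∑ o : Option (Fin c.length),
      A^((c.extend o).length) * (((c.extend o).length).factorial : ℝ) *
        ∏ i, (((c.extend o).partSize i).factorial : ℝ) := by
    have e1 : ∑ x : (Σ c : OrderedFinpartition n, Option (Fin c.length)),
        (fun c' : OrderedFinpartition (n+1) => A^c'.length * ((c'.length).factorial : ℝ) *
          ∏ i, ((c'.partSize i).factorial : ℝ)) (extendEquiv n x)
        = ∑ c' : OrderedFinpartition (n+1), A^c'.length * ((c'.length).factorial : ℝ) *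
          ∏ i, ((c'.partSize i).factorial : ℝ) :=
      Fintype.sum_equiv (extendEquiv n) _ _ (fun x => rfl)
    rw [myW, ← e1, ← Finset.univ_sigma_univ, Finset.sum_sigma]
    rfl
  rw [hsum]
  have key : ∀ c : OrderedFinpartition n,
      (∑ o : Option (Fin c.length),
        A^((c.extend o).length) * (((c.extend o).length).factorial : ℝ) *
          ∏ i, (((c.extend o).partSize i).factorial : ℝ))
      ≤ (A+2) * (n+1) *
        (A^c.length * ((c.length).factorial : ℝ) * ∏ i, ((c.partSize i).factorial : ℝ)) := by
    intro c
    have hleft : A^((c.extend none).length) * (((c.extend none).length).factorial : ℝ) *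
        ∏ i, (((c.extend none).partSize i).factorial : ℝ)
        = A * (c.length + 1) *
          (A^c.length * ((c.length).factorial : ℝ) * ∏ i, ((c.partSize i).factorial : ℝ)) := by
      show A^(c.length+1) * (((c.length+1)).factorial : ℝ) *
          ∏ i : Fin (c.length+1), ((Fin.cons (α := fun _ => ℕ) 1 c.partSize i).factorial : ℝ)
          = A * (c.length + 1) *
            (A^c.length * ((c.length).factorial : ℝ) * ∏ i, ((c.partSize i).factorial : ℝ))
      rw [Fin.prod_univ_succ]
      simp only [Fin.cons_zero, Fin.cons_succ, Nat.factorial_one, Nat.factorial_zero,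
        Nat.cast_one, one_mul, Nat.factorial_succ, pow_succ]
      push_cast
      ring
    have hmid : ∀ i : Fin c.length,
        A^((c.extend (some i)).length) * (((c.extend (some i)).length).factorial : ℝ) *
          ∏ j, (((c.extend (some i)).partSize j).factorial : ℝ)
        = ((c.partSize i : ℝ) + 1) *
          (A^c.length * ((c.length).factorial : ℝ) * ∏ j, ((c.partSize j).factorial : ℝ)) := by
      intro i
      have hfun : (fun j => (((update c.partSize i (c.partSize i + 1)) j).factorial : ℝ))
          = Function.update (fun j => ((c.partSize j).factorial : ℝ)) i
              (((c.partSize i + 1).factorial : ℝ)) := by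
        funext j
        rcases eq_or_ne j i with rfl | hj
        · simp
        · simp [Function.update_of_ne hj]
      show A^(c.length) * ((c.length).factorial : ℝ) *
          ∏ j : Fin c.length, (((update c.partSize i (c.partSize i + 1)) j).factorial : ℝ)
          = ((c.partSize i : ℝ) + 1) *
            (A^c.length * ((c.length).factorial : ℝ) * ∏ j, ((c.partSize j).factorial : ℝ))
      rw [hfun, Finset.prod_update_of_mem (Finset.mem_univ i),
        Finset.prod_eq_mul_prod_sdiff_singleton_of_mem (Finset.mem_univ i)
          (fun j => ((c.partSize j).factorial : ℝ)),
        Nat.factorial_succ]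
      push_cast
      ring
    rw [Fintype.sum_option, hleft, Finset.sum_congr rfl (fun i _ => hmid i), ← Finset.sum_mul]
    have hsum2 : ∑ i : Fin c.length, ((c.partSize i : ℝ) + 1) = (n : ℝ) + c.length := by
      rw [Finset.sum_add_distrib]
      simp only [Finset.sum_const, Finset.card_univ, Fintype.card_fin, nsmul_eq_mul, mul_one]
      have := my_sum_partSize c
      have h2 : ((∑ m, c.partSize m : ℕ) : ℝ) = (n : ℝ) := by rw [this]
      push_cast at h2 ⊢
      linarith
    rw [hsum2]
    have hw : (0:ℝ) ≤ A^c.length * ((c.length).factorial : ℝ) *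
        ∏ i, ((c.partSize i).factorial : ℝ) := by positivity
    have hl : (c.length : ℝ) ≤ n := by exact_mod_cast c.length_le
    nlinarith [mul_nonneg hw (sub_nonneg.2 hl), mul_nonneg (mul_nonneg hA hw) (sub_nonneg.2 hl),
      hw, hA]
  calc ∑ c : OrderedFinpartition n, _ ≤ ∑ c : OrderedFinpartition n, (A+2) * (n+1) *
        (A^c.length * ((c.length).factorial : ℝ) * ∏ i, ((c.partSize i).factorial : ℝ)) :=
      Finset.sum_le_sum (fun c _ => key c)
  _ = (A+2) * (n+1) * myW A n := by rw [myW, ← Finset.mul_sum]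

lemma myW_le (A : ℝ) (hA : 0 ≤ A) : ∀ n : ℕ, myW A n ≤ (A+2)^n * n.factorial := by
  intro n
  induction n with
  | zero => simp [myW_zero]
  | succ n ih =>
    have h1 := myW_succ A hA n
    have h2 : (A+2) * (n+1) * myW A n ≤ (A+2) * (n+1) * ((A+2)^n * n.factorial) := by
      have : (0:ℝ) ≤ (A+2) * (n+1) := by positivity
      exact mul_le_mul_of_nonneg_left ih this
    refine h1.trans (h2.trans (le_of_eq ?_))
    rw [pow_succ, Nat.factorial_succ]
    push_cast
    ring

lemma my_norm_cafp {E F G : Type*} [NormedAddCommGroup E] [NormedSpace ℝ E]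
    [NormedAddCommGroup F] [NormedSpace ℝ F] [NormedAddCommGroup G] [NormedSpace ℝ G]
    {n : ℕ} (c : OrderedFinpartition n)
    (g : ContinuousMultilinearMap ℝ (fun _ : Fin c.length => F) G)
    (pf : ∀ i : Fin c.length, ContinuousMultilinearMap ℝ (fun _ : Fin (c.partSize i) => E) F) :
    ‖c.compAlongOrderedFinpartition g pf‖ ≤ ‖g‖ * ∏ i, ‖pf i‖ := by
  apply ContinuousMultilinearMap.opNorm_le_bound (by positivity) (fun v => ?_)
  simp only [compAlongOrderFinpartition_apply]
  apply (g.le_opNorm _).trans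
  rw [mul_assoc, ← c.prod_sigma_eq_prod, ← Finset.prod_mul_distrib]
  gcongr with m _
  exact (pf m).le_opNorm _


/-- Jet-norm estimate for composition with a real analytic map: if `Φ` is real analytic on
an open set `U ⊆ ℝᵖ` with `Φ '' U ⊆ V` for an open `V ⊆ ℝ^q`, then for every compact
`K ⊆ U` there are `C, σ > 0` such that for every `f` that is `C^∞` on `V`, every `m` and
every `x ∈ K`, the `m`-jet norm of `f ∘ Φ` at `x` is at most `C σ⁻ᵐ` times the `m`-jet norm
of `f` at `Φ x`. -/
theorem jet_norm_comp_analytic_estimate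
    (p q : ℕ) (U : Set (Fin p → ℝ)) (V : Set (Fin q → ℝ)) (hU : IsOpen U) (hV : IsOpen V)
    (Φ : (Fin p → ℝ) → (Fin q → ℝ)) (hΦ : AnalyticOnNhd ℝ Φ U) (hΦUV : Φ '' U ⊆ V) :
    ∀ K : Set (Fin p → ℝ), K ⊆ U → IsCompact K →
      ∃ C > (0 : ℝ), ∃ σ > (0 : ℝ),
        ∀ f : (Fin q → ℝ) → ℝ, ContDiffOn ℝ (⊤ : ℕ∞) f V →
          ∀ (m : ℕ), ∀ x ∈ K,
            ∑ j ∈ Finset.range (m + 1),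
                ‖iteratedFDerivWithin ℝ j (f ∘ Φ) U x‖ / (j.factorial : ℝ)
              ≤ C * σ ^ (-(m : ℤ)) *
                ∑ j ∈ Finset.range (m + 1),
                  ‖iteratedFDerivWithin ℝ j f V (Φ x)‖ / (j.factorial : ℝ) := by
  intro K hKU cK
  obtain ⟨A, b, hA, hb, hbound⟩ := my_uniform_bound.{0,0} cK (fun x hx => hΦ x (hKU hx))
  set β : ℝ := b * (A + 2) with hβdef
  have hβ1 : 1 ≤ β := by nlinarith
  have hβ0 : 0 < β := by linarith
  clear_value β
  refine ⟨1, one_pos, (2*β)⁻¹, by positivity, ?_⟩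
  intro f hf m x hxK
  have hxU : x ∈ U := hKU hxK
  have hUD : UniqueDiffOn ℝ U := hU.uniqueDiffOn
  have hVD : UniqueDiffOn ℝ V := hV.uniqueDiffOn
  have hmaps : Set.MapsTo Φ U V := fun y hy => hΦUV ⟨y, hy, rfl⟩
  have hΦsm : ContDiffOn ℝ (⊤ : ℕ∞) Φ U := hΦ.contDiffOn hUD
  set S : ℝ := ∑ j ∈ Finset.range (m + 1),
      ‖iteratedFDerivWithin ℝ j f V (Φ x)‖ / (j.factorial : ℝ) with hSdef
  have hS0 : 0 ≤ S := Finset.sum_nonneg fun j _ => by positivity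
  have hcomp : HasFTaylorSeriesUpToOn ((⊤ : ℕ∞) : WithTop ℕ∞) (f ∘ Φ)
      (fun y => (ftaylorSeriesWithin ℝ f V (Φ y)).taylorComp (ftaylorSeriesWithin ℝ Φ U y)) U :=
    (hf.ftaylorSeriesWithin hVD).comp (hΦsm.ftaylorSeriesWithin hUD) hmaps
  have hder : ∀ n : ℕ, iteratedFDerivWithin ℝ n (f ∘ Φ) U x
      = (ftaylorSeriesWithin ℝ f V (Φ x)).taylorComp (ftaylorSeriesWithin ℝ Φ U x) n :=
    fun n => (hcomp.eq_iteratedFDerivWithin_of_uniqueDiffOn (by exact_mod_cast le_top) hUD hxU).symm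
  -- jet bound for f
  have hfjet : ∀ l : ℕ, l ≤ m → ‖iteratedFDerivWithin ℝ l f V (Φ x)‖ ≤ (l.factorial : ℝ) * S := by
    intro l hl
    have : ‖iteratedFDerivWithin ℝ l f V (Φ x)‖ / (l.factorial : ℝ) ≤ S :=
      Finset.single_le_sum (f := fun j => ‖iteratedFDerivWithin ℝ j f V (Φ x)‖ / (j.factorial : ℝ))
        (fun j _ => by positivity) (Finset.mem_range.2 (Nat.lt_succ_of_le hl))
    have hfac : (0:ℝ) < l.factorial := by exact_mod_cast l.factorial_pos
    rw [div_le_iff₀ hfac] at this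
    linarith [this]
  -- Φ bound within U
  have hΦb : ∀ k : ℕ, ‖iteratedFDerivWithin ℝ k Φ U x‖ ≤ (k.factorial : ℝ) * (A * b^k) := by
    intro k
    rw [iteratedFDerivWithin_of_isOpen k hU hxU]
    exact hbound x hxK k
  -- key per-order bound
  have key : ∀ n : ℕ, n ≤ m →
      ‖iteratedFDerivWithin ℝ n (f ∘ Φ) U x‖ ≤ S * β^n * (n.factorial : ℝ) := by
    intro n hn
    rw [hder n]
    have h1 : ‖(ftaylorSeriesWithin ℝ f V (Φ x)).taylorComp (ftaylorSeriesWithin ℝ Φ U x) n‖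
        ≤ ∑ c : OrderedFinpartition n,
            ‖iteratedFDerivWithin ℝ c.length f V (Φ x)‖ *
              ∏ i, ‖iteratedFDerivWithin ℝ (c.partSize i) Φ U x‖ := by
      refine (norm_sum_le _ _).trans (Finset.sum_le_sum fun c _ => ?_)
      exact my_norm_cafp c _ _
    refine h1.trans ?_
    have h2 : ∀ c : OrderedFinpartition n,
        ‖iteratedFDerivWithin ℝ c.length f V (Φ x)‖ *
            ∏ i, ‖iteratedFDerivWithin ℝ (c.partSize i) Φ U x‖
        ≤ (S * b^n) * (A^c.length * ((c.length).factorial : ℝ) *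
            ∏ i, ((c.partSize i).factorial : ℝ)) := by
      intro c
      have hcl : c.length ≤ m := le_trans c.length_le hn
      have hterm : ∏ i, ‖iteratedFDerivWithin ℝ (c.partSize i) Φ U x‖
          ≤ ∏ i, (((c.partSize i).factorial : ℝ) * (A * b^(c.partSize i))) :=
        Finset.prod_le_prod (fun i _ => norm_nonneg _) (fun i _ => hΦb (c.partSize i))
      have hprod : ∏ i, (((c.partSize i).factorial : ℝ) * (A * b^(c.partSize i)))
          = (∏ i, ((c.partSize i).factorial : ℝ)) * (A^c.length * b^n) := by
        rw [Finset.prod_mul_distrib, Finset.prod_mul_distrib]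
        congr 1
        congr 1
        · simp [Finset.prod_const, Finset.card_univ]
        · rw [Finset.prod_pow_eq_pow_sum]
          congr 1
          exact my_sum_partSize c
      calc ‖iteratedFDerivWithin ℝ c.length f V (Φ x)‖ *
              ∏ i, ‖iteratedFDerivWithin ℝ (c.partSize i) Φ U x‖
          ≤ (((c.length).factorial : ℝ) * S) *
              ((∏ i, ((c.partSize i).factorial : ℝ)) * (A^c.length * b^n)) := by
            have := hfjet c.length hcl
            have h3 := hterm.trans (le_of_eq hprod)
            have h4 : (0:ℝ) ≤ ∏ i, ‖iteratedFDerivWithin ℝ (c.partSize i) Φ U x‖ :=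
              Finset.prod_nonneg fun i _ => norm_nonneg _
            have h5 : (0:ℝ) ≤ ((c.length).factorial : ℝ) * S := by positivity
            exact mul_le_mul this h3 h4 h5
      _ = (S * b^n) * (A^c.length * ((c.length).factorial : ℝ) *
              ∏ i, ((c.partSize i).factorial : ℝ)) := by ring
    calc (∑ c : OrderedFinpartition n,
            ‖iteratedFDerivWithin ℝ c.length f V (Φ x)‖ *
              ∏ i, ‖iteratedFDerivWithin ℝ (c.partSize i) Φ U x‖)
        ≤ ∑ c : OrderedFinpartition n, (S * b^n) * (A^c.length * ((c.length).factorial : ℝ) *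
              ∏ i, ((c.partSize i).factorial : ℝ)) := Finset.sum_le_sum fun c _ => h2 c
    _ = (S * b^n) * myW A n := by rw [myW, ← Finset.mul_sum]
    _ ≤ (S * b^n) * ((A+2)^n * n.factorial) := by
          have := myW_le A (le_of_lt hA) n
          have hb0 : (0:ℝ) ≤ b := by linarith
          have : (0:ℝ) ≤ S * b^n := by positivity
          exact mul_le_mul_of_nonneg_left (myW_le A (le_of_lt hA) n) this
    _ = S * β^n * (n.factorial : ℝ) := by rw [hβdef, mul_pow]; ring
  -- sum up
  have hfinal : ∑ j ∈ Finset.range (m + 1),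
      ‖iteratedFDerivWithin ℝ j (f ∘ Φ) U x‖ / (j.factorial : ℝ) ≤ (m+1) * (S * β^m) := by
    have hstepj : ∀ j ∈ Finset.range (m+1),
        ‖iteratedFDerivWithin ℝ j (f ∘ Φ) U x‖ / (j.factorial : ℝ) ≤ S * β^m := by
      intro j hj
      have hjm : j ≤ m := Nat.lt_succ_iff.1 (Finset.mem_range.1 hj)
      have hfac : (0:ℝ) < j.factorial := by exact_mod_cast j.factorial_pos
      rw [div_le_iff₀ hfac]
      refine (key j hjm).trans ?_
      have : β^j ≤ β^m := pow_le_pow_right₀ hβ1 hjm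
      have h6 : S * β^j ≤ S * β^m := mul_le_mul_of_nonneg_left this hS0
      nlinarith [h6, hfac]
    calc ∑ j ∈ Finset.range (m + 1), ‖iteratedFDerivWithin ℝ j (f ∘ Φ) U x‖ / (j.factorial : ℝ)
        ≤ ∑ _j ∈ Finset.range (m + 1), S * β^m := Finset.sum_le_sum hstepj
    _ = (m+1) * (S * β^m) := by
          rw [Finset.sum_const, Finset.card_range]
          push_cast
          ring
  refine hfinal.trans ?_
  have hzpow : ((2*β)⁻¹ : ℝ) ^ (-(m:ℤ)) = (2*β)^m := by
    rw [zpow_neg, inv_zpow, inv_inv, zpow_natCast]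
  rw [hzpow, one_mul]
  have hm2 : ((m:ℝ)+1) ≤ 2^m := by
    exact_mod_cast Nat.succ_le_of_lt (Nat.lt_two_pow_self (n := m))
  calc ((m:ℝ)+1) * (S * β^m) ≤ (2:ℝ)^m * (S * β^m) := by
        have h8 : (0:ℝ) ≤ S * β^m := by positivity
        exact mul_le_mul_of_nonneg_right hm2 h8
  _ = (2*β)^m * S := by rw [mul_pow]; ring
end
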